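/- arXiv:1805.01666 — 4 statements merged into one kernel-verified Lean document; each statement's English description precedes it below -/
import Mathlib

section
/- Let (L, q_L) be a quadratic 𝔬-lattice of rank n, let k ≥ n, and let L' be a lattice in V equipped with the quadratic form q_{L'} obtained by restricting q_L ⊗ F. Then q_{L'}(L') ⊆ 𝔬 if and only if there exists a primitive isometry from (L', q_{L'}) to (H_k, q_k). -/
namespace GKPaper

open scoped BigOperators

section Core

variable {𝔬 : Type*} [CommRing 𝔬]

/-- The hyperbolic plane over a commutative ring `R`: the quadratic form
`(x, y) ↦ x * y` on `R × R`, whose Gram matrix is `[[0, 1/2], [1/2, 0]]`. -/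
noncomputable def hypPlane (R : Type*) [CommRing R] : QuadraticForm R (R × R) :=
  QuadraticMap.linMulLin (LinearMap.fst R R R) (LinearMap.snd R R R)

/-- The hyperbolic quadratic lattice `H_k` of rank `2k` over `R`, the orthogonal
sum of `k` copies of the hyperbolic plane. -/
noncomputable def Hyp (R : Type*) [CommRing R] (k : ℕ) : QuadraticForm R (Fin k → R × R) :=
  QuadraticMap.pi fun _ : Fin k => hypPlane R

/-- The matrix of the polar (bilinear) form of `Q` in the standard basis. -/
noncomputable def gramPolar {n : ℕ} (Q : QuadraticForm 𝔬 (Fin n → 𝔬)) :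
    Matrix (Fin n) (Fin n) 𝔬 :=
  Matrix.of fun i j => QuadraticMap.polar Q (Pi.single i 1) (Pi.single j 1)

/-- `(L, q_L)` is a quadratic lattice: the extension of `q_L` to `V = L ⊗ F` is
nondegenerate, i.e. the (half-integral) Gram matrix has nonzero determinant;
equivalently (in residue characteristic zero) the polar matrix has nonzero
determinant. -/
def IsQuadLattice {n : ℕ} (Q : QuadraticForm 𝔬 (Fin n → 𝔬)) : Prop :=
  (gramPolar Q).det ≠ 0

/-- The base change of the integral quadratic form `Q` on `𝔬^n` to an `𝔬`-algebra `R`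
(written out via the Gram data of `Q` in the standard basis). -/
noncomputable def bc {n : ℕ} (Q : QuadraticForm 𝔬 (Fin n → 𝔬)) (R : Type*) [CommRing R]
    [Algebra 𝔬 R] : (Fin n → R) → R := fun x =>
  (∑ i, algebraMap 𝔬 R (Q (Pi.single i 1)) * x i ^ 2) +
    ∑ i, ∑ j ∈ Finset.Ioi i,
      algebraMap 𝔬 R (QuadraticMap.polar Q (Pi.single i 1) (Pi.single j 1)) * (x i * x j)

/-- `S(B)` for the Gram matrix `B` of `Q` with respect to the basis `v`:
non-decreasing sequences `(a_1, …, a_n)` of non-negative integers with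
`ord (b_ii) ≥ a_i` and `ord (2 b_ij) ≥ (a_i + a_j) / 2`, the latter expressed
as `π ^ (a_i + a_j) ∣ (2 b_ij) ^ 2`. -/
def SWith (π : 𝔬) {n : ℕ} (Q : QuadraticForm 𝔬 (Fin n → 𝔬)) (v : Fin n → Fin n → 𝔬) :
    Set (Fin n → ℕ) :=
  {a | Monotone a ∧ (∀ i, π ^ a i ∣ Q (v i)) ∧
    ∀ i j, π ^ (a i + a j) ∣ QuadraticMap.polar Q (v i) (v j) ^ 2}

/-- `𝐒({B}) = ⋃_{U ∈ GL_n(𝔬)} S(ᵗU B U)`: the union of `S` over all bases of the lattice. -/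
def GKSet (π : 𝔬) {n : ℕ} (Q : QuadraticForm 𝔬 (Fin n → 𝔬)) : Set (Fin n → ℕ) :=
  {a | ∃ b : Module.Basis (Fin n) 𝔬 (Fin n → 𝔬), a ∈ SWith π Q fun i => b i}

-- The Gross–Keating invariant `GK(B)`: the greatest element of `𝐒({B})` with
-- respect to the lexicographic order (it exists; junk value otherwise).
open Classical in
noncomputable def GKinv (π : 𝔬) {n : ℕ} (Q : QuadraticForm 𝔬 (Fin n → 𝔬)) : Fin n → ℕ :=
  if h : ∃ a ∈ GKSet π Q, ∀ c ∈ GKSet π Q, toLex c ≤ toLex a then h.choose else fun _ => 0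

/-- `Q` is optimal (with respect to the standard basis): `GK(B) ∈ S(B)`. -/
def IsOptimal (π : 𝔬) {n : ℕ} (Q : QuadraticForm 𝔬 (Fin n → 𝔬)) : Prop :=
  GKinv π Q ∈ SWith π Q fun i => Pi.single i 1

end Core

section Lattices

variable {𝔬 : Type*} [CommRing 𝔬] (F : Type*) [Field F] [Algebra 𝔬 F]

variable (𝔬) in
/-- The standard lattice `L = 𝔬^n` sitting inside `V = F^n`. -/
def stdLat (n : ℕ) : Submodule 𝔬 (Fin n → F) :=
  Submodule.span 𝔬 (Set.range fun i : Fin n => (Pi.single i 1 : Fin n → F))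

/-- A lattice in `V = F^n`: a finitely generated `𝔬`-submodule of full rank. -/
def IsLattice {n : ℕ} (L : Submodule 𝔬 (Fin n → F)) : Prop :=
  L.FG ∧ Submodule.span F (L : Set (Fin n → F)) = ⊤

/-- The restriction `q_{L'}` of `q_L ⊗ F` to `L'` takes values in `𝔬`. -/
def IsIntegral {n : ℕ} (Q : QuadraticForm 𝔬 (Fin n → 𝔬)) (L : Submodule 𝔬 (Fin n → F)) :
    Prop :=
  ∀ x ∈ L, bc Q F x ∈ Set.range (algebraMap 𝔬 F)

/-- The submodule `π^N • M` of an `𝔬`-module `M`. -/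
def redSub (π : 𝔬) (N : ℕ) (M : Type*) [AddCommGroup M] [Module 𝔬 M] : Submodule 𝔬 M :=
  Ideal.span {π ^ N} • (⊤ : Submodule 𝔬 M)

/-- `O(L', H_k)(𝔬/π^N)`: linear maps `L'/π^N L' → H_k/π^N H_k` preserving the
induced quadratic forms (stated via arbitrary lifts). -/
def OSet (π : 𝔬) {n : ℕ} (Q : QuadraticForm 𝔬 (Fin n → 𝔬)) (L : Submodule 𝔬 (Fin n → F))
    (k N : ℕ) :
    Set ((↥L ⧸ redSub π N ↥L) →ₗ[𝔬]
      ((Fin k → 𝔬 × 𝔬) ⧸ redSub π N (Fin k → 𝔬 × 𝔬))) :=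
  {φ | ∀ (x : L) (y : Fin k → 𝔬 × 𝔬),
    φ (Submodule.Quotient.mk x) = Submodule.Quotient.mk y →
    ∃ c ∈ Ideal.span {π ^ N},
      algebraMap 𝔬 F (Hyp 𝔬 k y) - bc Q F (x : Fin n → F) = algebraMap 𝔬 F c}

/-- `O^prim(L', H_k)(𝔬/π^N)`: as above, with the additional requirement that the
reduction modulo `π` is injective. -/
def OPrimSet (π : 𝔬) {n : ℕ} (Q : QuadraticForm 𝔬 (Fin n → 𝔬)) (L : Submodule 𝔬 (Fin n → F))
    (k N : ℕ) :
    Set ((↥L ⧸ redSub π N ↥L) →ₗ[𝔬]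
      ((Fin k → 𝔬 × 𝔬) ⧸ redSub π N (Fin k → 𝔬 × 𝔬))) :=
  {φ | φ ∈ OSet F π Q L k N ∧ ∀ x : L,
    (∃ y ∈ redSub π 1 (Fin k → 𝔬 × 𝔬),
      φ (Submodule.Quotient.mk x) = Submodule.Quotient.mk y) →
    x ∈ redSub π 1 ↥L}

-- The stable value of an eventually constant sequence (junk value `0` otherwise).
open Classical in
noncomputable def evVal (s : ℕ → ℚ) : ℚ :=
  if h : ∃ c : ℚ, ∀ᶠ N in Filter.atTop, s N = c then h.choose else 0

/-- The local density `α(L', H_k)` of a lattice `L'` of rank `r`: the stable value of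
`N ↦ f^{-N·D} · #O(L', H_k)(𝔬/π^N)` where `D = 2kr - r(r+1)/2`. -/
noncomputable def density (f : ℕ) (π : 𝔬) {n : ℕ} (Q : QuadraticForm 𝔬 (Fin n → 𝔬))
    (L : Submodule 𝔬 (Fin n → F)) (r k : ℕ) : ℚ :=
  evVal fun N => (Nat.card (OSet F π Q L k N) : ℚ) / (f : ℚ) ^ (N * (2 * k * r - r * (r + 1) / 2))

/-- The primitive local density `α^prim(L', H_k)`. -/
noncomputable def primDensity (f : ℕ) (π : 𝔬) {n : ℕ} (Q : QuadraticForm 𝔬 (Fin n → 𝔬))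
    (L : Submodule 𝔬 (Fin n → F)) (r k : ℕ) : ℚ :=
  evVal fun N =>
    (Nat.card (OPrimSet F π Q L k N) : ℚ) / (f : ℚ) ^ (N * (2 * k * r - r * (r + 1) / 2))

end Lattices


section Comb

/-- `σ` is an `ā`-admissible involution (Ikeda–Katsurada, Definition 3.1). The
blocks `I_s` are realized as the fibers of the non-decreasing sequence `a`. -/
noncomputable def Admissible {n : ℕ} (a : Fin n → ℕ) (σ : Equiv.Perm (Fin n)) : Prop :=
  σ * σ = 1 ∧
  -- (1)
  (Finset.univ.filter fun i => σ i = i).card ≤ 2 ∧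
  (∀ i ∈ Finset.univ.filter fun i' : Fin n => σ i' = i',
    ∀ j ∈ Finset.univ.filter fun j' : Fin n => σ j' = j', i ≠ j →
      a i % 2 ≠ a j % 2 ∧
      a i = sSup {m | ∃ l, (σ l = l ∨ a (σ l) < a l) ∧ a l % 2 = a i % 2 ∧ a l = m}) ∧
  -- (2)
  (∀ i₀ : Fin n,
    (Finset.univ.filter fun i => a i = a i₀ ∧ a (σ i) < a i).card ≤ 1 ∧
    (Finset.univ.filter fun i => a i = a i₀ ∧ (a i < a (σ i) ∨ σ i = i)).card ≤ 1) ∧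
  -- (3)
  (∀ i, a i < a (σ i) →
    a (σ i) = sInf {m | ∃ l, a (σ l) < a l ∧ a i < a l ∧ a l % 2 = a i % 2 ∧ a l = m}) ∧
  (∀ i, a (σ i) < a i →
    a (σ i) = sSup {m | ∃ l, a l < a (σ l) ∧ a l < a i ∧ a l % 2 = a i % 2 ∧ a l = m})

end Comb

section Red

variable {𝔬 : Type*} [CommRing 𝔬]

/-- The `𝔬`-linear map `𝔬² → 𝔬^n` sending `(s, t)` to `s • e_i + t • e_j`. -/
noncomputable def pairMap {n : ℕ} (i j : Fin n) : (Fin 2 → 𝔬) →ₗ[𝔬] (Fin n → 𝔬) :=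
  ((LinearMap.proj 0 : (Fin 2 → 𝔬) →ₗ[𝔬] 𝔬).smulRight (Pi.single i 1)) +
    ((LinearMap.proj 1 : (Fin 2 → 𝔬) →ₗ[𝔬] 𝔬).smulRight (Pi.single j 1))

/-- `Q` (with respect to the standard basis) is a reduced form of GK-type `(a, σ)`
(Ikeda–Katsurada, Definition 3.2). -/
noncomputable def IsReducedOf (π : 𝔬) {n : ℕ} (Q : QuadraticForm 𝔬 (Fin n → 𝔬))
    (a : Fin n → ℕ) (σ : Equiv.Perm (Fin n)) : Prop :=
  Admissible a σ ∧ (a ∈ SWith π Q fun i => Pi.single i 1) ∧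
  -- (i)
  (∀ i, σ i ≠ i → a i ≤ a (σ i) →
    GKinv π (Q.comp (pairMap i (σ i))) = ![a i, a (σ i)]) ∧
  -- (ii)
  (∀ i, σ i = i →
    π ^ a i ∣ Q (Pi.single i 1) ∧ ¬ π ^ (a i + 1) ∣ Q (Pi.single i 1)) ∧
  -- (iii)
  (∀ i j, j ≠ i → j ≠ σ i →
    π ^ (a i + a j + 1) ∣ QuadraticMap.polar Q (Pi.single i 1) (Pi.single j 1) ^ 2)

/-- The standard basis is a reduced basis for `Q`. -/
noncomputable def IsReducedStd (π : 𝔬) {n : ℕ} (Q : QuadraticForm 𝔬 (Fin n → 𝔬)) : Prop :=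
  ∃ σ : Equiv.Perm (Fin n), IsReducedOf π Q (GKinv π Q) σ

end Red

section Abs

variable {𝔬 : Type*} [CommRing 𝔬] (F : Type*) [Field F] [Algebra 𝔬 F]

/-- `S` conditions for an abstract lattice `L ⊆ F^n` with respect to a family `v` of
elements of `L` (a basis), using the ambient form `q_L ⊗ F`. -/
def SAbs (π : 𝔬) {n : ℕ} (Q : QuadraticForm 𝔬 (Fin n → 𝔬)) (L : Submodule 𝔬 (Fin n → F))
    {m : ℕ} (v : Fin m → L) : Set (Fin m → ℕ) :=
  {a | Monotone a ∧
    (∀ i, ∃ c : 𝔬, bc Q F ((v i : Fin n → F)) = algebraMap 𝔬 F (π ^ a i * c)) ∧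
    ∀ i j, ∃ c : 𝔬,
      QuadraticMap.polar (bc Q F) (v i : Fin n → F) (v j : Fin n → F) ^ 2 =
        algebraMap 𝔬 F (π ^ (a i + a j) * c)}

/-- `𝐒({B})` for an abstract lattice `L ⊆ F^n` of rank `m`. -/
def GKSetAbs (π : 𝔬) {n : ℕ} (Q : QuadraticForm 𝔬 (Fin n → 𝔬))
    (L : Submodule 𝔬 (Fin n → F)) (m : ℕ) : Set (Fin m → ℕ) :=
  {a | ∃ b : Module.Basis (Fin m) 𝔬 L, a ∈ SAbs F π Q L fun i => b i}

open Classical in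
/-- The Gross–Keating invariant of an abstract lattice `L ⊆ F^n` of rank `m`. -/
noncomputable def GKAbs (π : 𝔬) {n : ℕ} (Q : QuadraticForm 𝔬 (Fin n → 𝔬))
    (L : Submodule 𝔬 (Fin n → F)) (m : ℕ) : Fin m → ℕ :=
  if h : ∃ a ∈ GKSetAbs F π Q L m, ∀ c ∈ GKSetAbs F π Q L m, toLex c ≤ toLex a then
    h.choose else fun _ => 0

/-- Membership in the radical of `L' ⊗ κ`, via arbitrary lifts: `v` lies in the
radical iff `q̄(v) = 0` and `v` pairs to zero with everything under the polar form. -/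
def inRad (π : 𝔬) {n : ℕ} (Q : QuadraticForm 𝔬 (Fin n → 𝔬)) (L : Submodule 𝔬 (Fin n → F))
    (v : ↥L ⧸ redSub π 1 ↥L) : Prop :=
  ∀ x : L, Submodule.Quotient.mk x = v →
    (∃ c : 𝔬, bc Q F (x : Fin n → F) = algebraMap 𝔬 F (π * c)) ∧
    ∀ y : L, ∃ c : 𝔬,
      QuadraticMap.polar (bc Q F) (x : Fin n → F) (y : Fin n → F) = algebraMap 𝔬 F (π * c)

/-- The cardinality of the radical of `L' ⊗ κ`; the dimension `a(L')` of the
nonsingular part is determined by `#Rad = f ^ (n - a(L'))`. -/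
noncomputable def radCard (π : 𝔬) {n : ℕ} (Q : QuadraticForm 𝔬 (Fin n → 𝔬))
    (L : Submodule 𝔬 (Fin n → F)) : ℕ :=
  Nat.card {v : ↥L ⧸ redSub π 1 ↥L // inRad F π Q L v}

/-- The nonsingular part `L̄'₀` of `L' ⊗ κ` (of even dimension `a`) is split
(isometric to a hyperbolic space over `κ`): equivalently, `L' ⊗ κ` contains a
totally singular subspace of dimension `a/2 + (n - a)`. -/
def SplitCond (f : ℕ) (π : 𝔬) {n : ℕ} (Q : QuadraticForm 𝔬 (Fin n → 𝔬))
    (L : Submodule 𝔬 (Fin n → F)) (a : ℕ) : Prop :=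
  ∃ W : Submodule 𝔬 (↥L ⧸ redSub π 1 ↥L),
    (∀ v ∈ W, ∀ x : L, Submodule.Quotient.mk x = v →
      ∃ c : 𝔬, bc Q F (x : Fin n → F) = algebraMap 𝔬 F (π * c)) ∧
    Nat.card W = f ^ (a / 2 + (n - a))

/-- The index `[L' : L]` measured by cardinality: `#(L'/L) = f ^ [L' : L]`. -/
noncomputable def quotCard {n : ℕ} (L L' : Submodule 𝔬 (Fin n → F)) : ℕ :=
  Nat.card (↥L' ⧸ Submodule.comap L'.subtype L)

end Abs

end GKPaper

namespace GKPaper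


section AuxS1

variable {𝔬 : Type*} [CommRing 𝔬] {F : Type*} [Field F] [Algebra 𝔬 F]

/-- The base change of `Q` to `F`, as an honest quadratic form over `F`. -/
noncomputable def QF {n : ℕ} (F : Type*) [Field F] [Algebra 𝔬 F]
    (Q : QuadraticForm 𝔬 (Fin n → 𝔬)) : QuadraticForm F (Fin n → F) :=
  (∑ i, algebraMap 𝔬 F (Q (Pi.single i 1)) •
      QuadraticMap.linMulLin (LinearMap.proj i) (LinearMap.proj i)) +
  ∑ i, ∑ j ∈ Finset.Ioi i,
    algebraMap 𝔬 F (QuadraticMap.polar Q (Pi.single i 1) (Pi.single j 1)) •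
      QuadraticMap.linMulLin (LinearMap.proj i) (LinearMap.proj j)

lemma bc_eq {n : ℕ} (Q : QuadraticForm 𝔬 (Fin n → 𝔬)) (x : Fin n → F) :
    bc Q F x = QF F Q x := by
  simp only [bc, QF, QuadraticMap.add_apply, QuadraticMap.sum_apply, QuadraticMap.smul_apply,
    QuadraticMap.linMulLin_apply, LinearMap.proj_apply, smul_eq_mul, sq]

lemma hyp_apply {k : ℕ} (y : Fin k → 𝔬 × 𝔬) : Hyp 𝔬 k y = ∑ j, (y j).1 * (y j).2 := by
  simp [Hyp, hypPlane, QuadraticMap.pi_apply, QuadraticMap.linMulLin_apply]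

lemma polar_hyp {k : ℕ} (x y : Fin k → 𝔬 × 𝔬) :
    QuadraticMap.polar (Hyp 𝔬 k) x y = ∑ j, ((x j).1 * (y j).2 + (y j).1 * (x j).2) := by
  simp only [QuadraticMap.polar, hyp_apply, Pi.add_apply, Prod.fst_add, Prod.snd_add,
    ← Finset.sum_sub_distrib]
  exact Finset.sum_congr rfl fun j _ => by ring

end AuxS1

section S1

variable {𝔬 : Type*} [CommRing 𝔬] [IsDomain 𝔬] [IsDiscreteValuationRing 𝔬]
  [CharZero 𝔬] [Finite (IsLocalRing.ResidueField 𝔬)]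
  [IsAdicComplete (IsLocalRing.maximalIdeal 𝔬) 𝔬]
  {F : Type*} [Field F] [Algebra 𝔬 F] [IsFractionRing 𝔬 F]

/-- for a lattice `L'` in `V` with the restricted form `q_{L'}`,
one has `q_{L'}(L') ⊆ 𝔬` iff there exists a primitive isometry `L' → H_k`. -/
theorem statement_1 (π : 𝔬) (hπ : Irreducible π) {n k : ℕ} (hnk : n ≤ k)
    (Q : QuadraticForm 𝔬 (Fin n → 𝔬)) (hQ : IsQuadLattice Q)
    (L' : Submodule 𝔬 (Fin n → F)) (hL' : IsLattice F L') :
    IsIntegral F Q L' ↔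
      ∃ φ : ↥L' →ₗ[𝔬] (Fin k → 𝔬 × 𝔬),
        Function.Injective φ ∧
        (∀ x : L', algebraMap 𝔬 F (Hyp 𝔬 k (φ x)) = bc Q F (x : Fin n → F)) ∧
        (∀ x : L', φ x ∈ redSub π 1 (Fin k → 𝔬 × 𝔬) → x ∈ redSub π 1 ↥L') := by
  classical
  constructor
  · intro hInt
    -- Set up a basis of `L'` of size `n`.
    haveI : Module.Finite 𝔬 ↥L' := Module.Finite.iff_fg.mpr hL'.1
    have hinj : Function.Injective (algebraMap 𝔬 F) := IsFractionRing.injective 𝔬 F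
    haveI : NoZeroSMulDivisors 𝔬 F := ⟨fun {cc x} h => by
      rw [Algebra.smul_def] at h
      rcases mul_eq_zero.mp h with h | h
      · exact Or.inl ((map_eq_zero_iff _ hinj).mp h)
      · exact Or.inr h⟩
    set ι := Module.Free.ChooseBasisIndex 𝔬 ↥L' with hι
    let b0 : Module.Basis ι 𝔬 ↥L' := Module.Free.chooseBasis 𝔬 ↥L'
    have hli0 : LinearIndependent 𝔬 (fun i => (b0 i : Fin n → F)) :=
      b0.linearIndependent.map' L'.subtype (Submodule.ker_subtype L')
    have hliF : LinearIndependent F (fun i => (b0 i : Fin n → F)) :=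
      (LinearIndependent.iff_fractionRing 𝔬 F).mp hli0
    have hspan0 : Submodule.span 𝔬 (Set.range fun i => (b0 i : Fin n → F)) = L' := by
      have h1 : (Set.range fun i => (b0 i : Fin n → F)) = L'.subtype '' Set.range b0 := by
        rw [← Set.range_comp]; rfl
      rw [h1, ← Submodule.map_span, b0.span_eq, Submodule.map_subtype_top]
    have hspF : ⊤ ≤ Submodule.span F (Set.range fun i => (b0 i : Fin n → F)) := by
      rw [← Submodule.span_span_of_tower 𝔬, hspan0, hL'.2]
    let bF : Module.Basis ι F (Fin n → F) := Module.Basis.mk hliF hspF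
    have hcard : Fintype.card ι = n := by
      have h1 := Module.finrank_eq_card_basis bF
      rw [Module.finrank_fin_fun] at h1
      exact h1.symm
    let b : Module.Basis (Fin n) 𝔬 ↥L' := b0.reindex (Fintype.equivFinOfCardEq hcard)
    set v : Fin n → Fin n → F := fun i => (b i : Fin n → F) with hv
    -- Integral values and polar values.
    have hmem : ∀ z : ↥L', ∃ cc : 𝔬, algebraMap 𝔬 F cc = QF F Q (z : Fin n → F) := by
      intro z
      obtain ⟨cc, hcc⟩ := hInt z z.2
      exact ⟨cc, by rw [hcc, bc_eq]⟩
    have hqv : ∀ i, ∃ cc, algebraMap 𝔬 F cc = QF F Q (v i) := fun i => hmem (b i)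
    choose c hc using hqv
    have hpv : ∀ i j, ∃ pp, algebraMap 𝔬 F pp =
        QuadraticMap.polar (QF F Q) (v i) (v j) := by
      intro i j
      obtain ⟨c1, h1⟩ := hmem (b i + b j)
      obtain ⟨c2, h2⟩ := hmem (b i)
      obtain ⟨c3, h3⟩ := hmem (b j)
      refine ⟨c1 - c2 - c3, ?_⟩
      have hco : ((b i + b j : ↥L') : Fin n → F) = v i + v j := rfl
      rw [QuadraticMap.polar, map_sub, map_sub, h1, h2, h3, hco]
    choose p hp using hpv
    have psymm : ∀ i j, p i j = p j i := fun i j =>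
      hinj (by rw [hp, hp, QuadraticMap.polar_comm])
    -- The target vectors in the hyperbolic lattice.
    set u : Fin n → Fin n → 𝔬 :=
      (fun i j => if j = i then c i else if j < i then p i j else 0) with hu
    set w : Fin n → Fin k → 𝔬 × 𝔬 := (fun i j =>
      (if j = Fin.castLE hnk i then 1 else 0,
        if h : (j : ℕ) < n then u i ⟨j, h⟩ else 0)) with hwdef
    have hw1 : ∀ i i', (w i (Fin.castLE hnk i')).1 = if i' = i then 1 else 0 := by
      intro i i'
      simp only [hwdef]
      by_cases h : i' = i
      · simp [h]
      · rw [if_neg (by simpa [Fin.castLE_inj] using h), if_neg h]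
    have hw1' : ∀ i j, j ≠ Fin.castLE hnk i → (w i j).1 = 0 := by
      intro i j hj; simp only [hwdef]; rw [if_neg hj]
    have hw2 : ∀ i i', (w i (Fin.castLE hnk i')).2 = u i i' := by
      intro i i'
      simp only [hwdef]
      have h : ((Fin.castLE hnk i' : Fin k) : ℕ) < n := by simp
      rw [dif_pos h]
      exact congrArg (u i) (Fin.ext (by simp))
    have hHw : ∀ i, Hyp 𝔬 k (w i) = c i := by
      intro i
      rw [hyp_apply]
      rw [Finset.sum_eq_single (Fin.castLE hnk i) (fun j _ hj => by rw [hw1' i j hj, zero_mul])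
        (fun h => absurd (Finset.mem_univ _) h)]
      rw [hw1, hw2, if_pos rfl, one_mul, hu]
      simp
    have hPw : ∀ i j, i ≠ j → QuadraticMap.polar (Hyp 𝔬 k) (w i) (w j) = p i j := by
      intro i j hij
      rw [polar_hyp, Finset.sum_add_distrib]
      have e1 : ∑ m, (w i m).1 * (w j m).2 = u j i := by
        rw [Finset.sum_eq_single (Fin.castLE hnk i) (fun m _ hm => by rw [hw1' i m hm, zero_mul])
          (fun h => absurd (Finset.mem_univ _) h)]
        rw [hw1, hw2, if_pos rfl, one_mul]
      have e2 : ∑ m, (w j m).1 * (w i m).2 = u i j := by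
        rw [Finset.sum_eq_single (Fin.castLE hnk j) (fun m _ hm => by rw [hw1' j m hm, zero_mul])
          (fun h => absurd (Finset.mem_univ _) h)]
        rw [hw1, hw2, if_pos rfl, one_mul]
      rw [e1, e2]
      rcases lt_trichotomy i j with h | h | h
      · simp only [hu]
        rw [if_neg (ne_of_lt h), if_pos h, if_neg (Ne.symm hij), if_neg (not_lt.mpr h.le),
          add_zero, psymm j i]
      · exact absurd h hij
      · simp only [hu]
        rw [if_neg hij, if_neg (not_lt.mpr h.le), if_neg (Ne.symm hij), if_pos h, zero_add]
    -- The linear map.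
    let φ : ↥L' →ₗ[𝔬] (Fin k → 𝔬 × 𝔬) :=
      { toFun := fun x => ∑ i, b.repr x i • w i
        map_add' := fun x y => by
          simp only [map_add, Finsupp.coe_add, Pi.add_apply, add_smul,
            Finset.sum_add_distrib]
        map_smul' := fun r x => by
          simp only [map_smul, Finsupp.coe_smul, Pi.smul_apply, smul_eq_mul, mul_smul,
            RingHom.id_apply, ← Finset.smul_sum] }
    have hφ_coord : ∀ (z : ↥L') (i : Fin n), (φ z (Fin.castLE hnk i)).1 = b.repr z i := by
      intro z i
      show ((∑ i', b.repr z i' • w i') (Fin.castLE hnk i)).1 = b.repr z i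
      rw [Finset.sum_apply, Prod.fst_sum]
      rw [Finset.sum_eq_single i (fun i' _ hi' => by
        rw [Pi.smul_apply, Prod.smul_fst, hw1, if_neg (by
          intro h; exact hi' (by rw [h])), smul_zero])
        (fun h => absurd (Finset.mem_univ _) h)]
      rw [Pi.smul_apply, Prod.smul_fst, hw1, if_pos rfl, smul_eq_mul, mul_one]
    have hker : ∀ z : ↥L', φ z = 0 → z = 0 := by
      intro z hz
      have hr : b.repr z = 0 := by
        ext i
        rw [← hφ_coord z i, hz]
        simp
      simpa using b.repr.map_eq_zero_iff.mp hr
    refine ⟨φ, ?_, ?_, ?_⟩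
    · intro x y h
      have := hker (x - y) (by rw [map_sub, h, sub_self])
      exact sub_eq_zero.mp this
    · intro x
      have hxv : (x : Fin n → F) = ∑ i, algebraMap 𝔬 F (b.repr x i) • v i := by
        conv_lhs => rw [← b.sum_repr x]
        rw [AddSubmonoidClass.coe_finset_sum]
        exact Finset.sum_congr rfl fun i _ => by
          rw [SetLike.val_smul, algebraMap_smul]
      have hφx : φ x = ∑ i, b.repr x i • w i := rfl
      rw [hφx, QuadraticMap.map_sum, bc_eq, hxv, QuadraticMap.map_sum, map_add, map_sum,
        map_sum]
      congr 1
      · refine Finset.sum_congr rfl fun i _ => ?_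
        rw [QuadraticMap.map_smul, QuadraticMap.map_smul, smul_eq_mul, smul_eq_mul, map_mul,
          map_mul, hHw, hc]
      · refine Finset.sum_congr rfl fun ij hij => ?_
        induction ij using Sym2.ind with
        | _ i j =>
          simp only [Finset.mem_filter] at hij
          have hij' : i ≠ j := by simpa [Sym2.isDiag_iff_proj_eq] using hij.2
          rw [Sym2.map_mk, Sym2.map_mk, QuadraticMap.polarSym2_sym2Mk, QuadraticMap.polarSym2_sym2Mk]
          show algebraMap 𝔬 F
              (QuadraticMap.polar (⇑(Hyp 𝔬 k)) (b.repr x i • w i) (b.repr x j • w j)) =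
            QuadraticMap.polar (⇑(QF F Q)) (algebraMap 𝔬 F (b.repr x i) • v i)
              (algebraMap 𝔬 F (b.repr x j) • v j)
          rw [QuadraticMap.polar_smul_left,
            QuadraticMap.polar_smul_right, QuadraticMap.polar_smul_left,
            QuadraticMap.polar_smul_right, smul_eq_mul, smul_eq_mul, smul_eq_mul, smul_eq_mul,
            hPw i j hij', map_mul, map_mul, hp]
    · intro x hx
      have hx' : φ x ∈ Ideal.span {π ^ 1} • (⊤ : Submodule 𝔬 (Fin k → 𝔬 × 𝔬)) := hx
      rw [pow_one] at hx'
      have hex : ∃ y, φ x = π • y := by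
        refine Submodule.smul_induction_on hx' ?_ ?_
        · intro r hr m _
          obtain ⟨t, ht⟩ := Ideal.mem_span_singleton'.mp hr
          exact ⟨t • m, by rw [← ht, mul_comm, mul_smul]⟩
        · rintro z1 z2 ⟨y1, h1⟩ ⟨y2, h2⟩
          exact ⟨y1 + y2, by rw [h1, h2, smul_add]⟩
      obtain ⟨y, hy⟩ := hex
      have hdvd : ∀ i, b.repr x i = π * (y (Fin.castLE hnk i)).1 := by
        intro i
        rw [← hφ_coord x i, hy]
        simp [smul_eq_mul]
      have hxeq : x = π • (∑ i, (y (Fin.castLE hnk i)).1 • b i) := by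
        rw [Finset.smul_sum]
        conv_lhs => rw [← b.sum_repr x]
        refine Finset.sum_congr rfl fun i _ => ?_
        rw [hdvd i, mul_smul]
      rw [hxeq]
      show _ ∈ Ideal.span {π ^ 1} • (⊤ : Submodule 𝔬 ↥L')
      rw [pow_one]
      exact Submodule.smul_mem_smul (Ideal.mem_span_singleton_self π) Submodule.mem_top
  · rintro ⟨φ, -, hiso, -⟩ x hxL
    exact ⟨Hyp 𝔬 k (φ ⟨x, hxL⟩), hiso ⟨x, hxL⟩⟩

end S1
end GKPaper
end

section
/- Let (L', q_{L'}) be a quadratic 𝔬-lattice of rank n (so q_{L'}(L') ⊆ 𝔬). Then a(L') = dim_κ (L'⊗κ)/Rad(L'⊗κ) equals the number of zero entries of GK(L'). -/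
namespace GKPaper

section S6

variable {𝔬 : Type*} [CommRing 𝔬] [IsDomain 𝔬] [IsDiscreteValuationRing 𝔬]
  [CharZero 𝔬] [Finite (IsLocalRing.ResidueField 𝔬)]
  [IsAdicComplete (IsLocalRing.maximalIdeal 𝔬) 𝔬]
  {F : Type*} [Field F] [Algebra 𝔬 F] [IsFractionRing 𝔬 F]

/-- Membership in the radical of `L' ⊗ κ` for a coordinate quadratic lattice
`L' = 𝔬^n`, via arbitrary lifts: `q̄(v) = 0` and `v` pairs to zero with
everything under the reduced polar form. -/
def inRadC (π : 𝔬) {n : ℕ} (Q : QuadraticForm 𝔬 (Fin n → 𝔬))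
    (v : (Fin n → 𝔬) ⧸ redSub π 1 (Fin n → 𝔬)) : Prop :=
  ∀ x : Fin n → 𝔬, Submodule.Quotient.mk x = v →
    π ∣ Q x ∧ ∀ y : Fin n → 𝔬, π ∣ QuadraticMap.polar Q x y


section S6Aux

open QuadraticMap Pointwise Module

variable {𝔬 : Type*} [CommRing 𝔬]

set_option linter.unusedSectionVars false

/-- membership in the "radical preimage" of a coordinate lattice. -/
def InM (π : 𝔬) {n : ℕ} (Q : QuadraticForm 𝔬 (Fin n → 𝔬)) (x : Fin n → 𝔬) : Prop :=
  π ∣ Q x ∧ ∀ y, π ∣ QuadraticMap.polar Q x y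

lemma InM.add {π : 𝔬} {n : ℕ} {Q : QuadraticForm 𝔬 (Fin n → 𝔬)} {x x' : Fin n → 𝔬}
    (h : InM π Q x) (h' : InM π Q x') : InM π Q (x + x') := by
  constructor
  · have : Q (x + x') = Q x + Q x' + QuadraticMap.polar Q x x' := by
      unfold QuadraticMap.polar; ring
    rw [this]
    exact dvd_add (dvd_add h.1 h'.1) (h.2 x')
  · intro y
    rw [polar_add_left]
    exact dvd_add (h.2 y) (h'.2 y)

lemma InM.smul {π : 𝔬} {n : ℕ} {Q : QuadraticForm 𝔬 (Fin n → 𝔬)} {x : Fin n → 𝔬} (c : 𝔬)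
    (h : InM π Q x) : InM π Q (c • x) := by
  constructor
  · rw [QuadraticMap.map_smul, smul_eq_mul]
    exact Dvd.dvd.mul_left h.1 _
  · intro y
    rw [polar_smul_left, smul_eq_mul]
    exact Dvd.dvd.mul_left (h.2 y) _

lemma InM.pi_smul {π : 𝔬} {n : ℕ} {Q : QuadraticForm 𝔬 (Fin n → 𝔬)} (u : Fin n → 𝔬) :
    InM π Q (π • u) := by
  constructor
  · rw [QuadraticMap.map_smul, smul_eq_mul]
    exact Dvd.dvd.mul_right (dvd_mul_right π π) _
  · intro y
    rw [polar_smul_left, smul_eq_mul]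
    exact dvd_mul_right π _

lemma InM.sum {π : 𝔬} {n : ℕ} {Q : QuadraticForm 𝔬 (Fin n → 𝔬)} {ι : Type*} (s : Finset ι)
    (v : ι → Fin n → 𝔬) (h : ∀ i ∈ s, InM π Q (v i)) : InM π Q (∑ i ∈ s, v i) := by
  classical
  induction s using Finset.induction_on with
  | empty =>
    simp only [Finset.sum_empty]
    constructor
    · simp
    · intro y; simp [QuadraticMap.polar]
  | insert _ _ hni ih =>
    rw [Finset.sum_insert hni]
    exact InM.add (h _ (Finset.mem_insert_self _ _))
      (ih fun i hi => h i (Finset.mem_insert_of_mem hi))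

lemma InM.of_basis {π : 𝔬} {n : ℕ} {Q : QuadraticForm 𝔬 (Fin n → 𝔬)}
    (b : Basis (Fin n) 𝔬 (Fin n → 𝔬)) (x : Fin n → 𝔬) (hQ : π ∣ Q x)
    (h : ∀ j, π ∣ QuadraticMap.polar Q x (b j)) : InM π Q x := by
  refine ⟨hQ, fun y => ?_⟩
  have hy : QuadraticMap.polar Q x y = ∑ j, b.repr y j * QuadraticMap.polar Q x (b j) := by
    rw [← polarBilin_apply_apply]
    conv_lhs => rw [← b.sum_repr y, map_sum]
    refine Finset.sum_congr rfl fun j _ => ?_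
    rw [_root_.map_smul, smul_eq_mul, polarBilin_apply_apply]
  rw [hy]
  exact Finset.dvd_sum fun j _ => Dvd.dvd.mul_left (h j) _

lemma mem_redSub_iff {π : 𝔬} {M : Type*} [AddCommGroup M] [Module 𝔬 M] {x : M} :
    x ∈ redSub π 1 M ↔ ∃ y, x = π • y := by
  unfold redSub
  rw [pow_one, Submodule.ideal_span_singleton_smul]
  constructor
  · intro h
    rw [← SetLike.mem_coe, Submodule.coe_pointwise_smul] at h
    obtain ⟨y, -, hy⟩ := h
    exact ⟨y, hy.symm⟩
  · rintro ⟨y, rfl⟩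
    exact Submodule.smul_mem_pointwise_smul y π ⊤ trivial

lemma mem_redSub_iff_repr {π : 𝔬} {n : ℕ} (b : Basis (Fin n) 𝔬 (Fin n → 𝔬)) {x : Fin n → 𝔬}
    (hx : x ∈ redSub π 1 (Fin n → 𝔬)) : ∀ j, π ∣ b.repr x j := by
  obtain ⟨y, rfl⟩ := mem_redSub_iff.mp hx
  intro j
  rw [_root_.map_smul, Finsupp.smul_apply, smul_eq_mul]
  exact dvd_mul_right _ _

lemma mem_redSub_of_repr {π : 𝔬} {n : ℕ} (b : Basis (Fin n) 𝔬 (Fin n → 𝔬)) {x : Fin n → 𝔬}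
    (hx : ∀ j, π ∣ b.repr x j) : x ∈ redSub π 1 (Fin n → 𝔬) := by
  choose d hd using hx
  refine mem_redSub_iff.mpr ⟨∑ j, d j • b j, ?_⟩
  rw [Finset.smul_sum]
  nth_rewrite 1 [← b.sum_repr x]
  congr 1
  ext j
  rw [hd j, smul_smul]

lemma polar_expand {n : ℕ} (Q : QuadraticForm 𝔬 (Fin n → 𝔬)) (x y : Fin n → 𝔬) :
    QuadraticMap.polar Q x y = ∑ k, ∑ l, x k * y l * gramPolar Q k l := by
  have hrep : ∀ v : Fin n → 𝔬, v = ∑ k, v k • (Pi.single k 1 : Fin n → 𝔬) := by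
    intro v
    ext j
    simp [Finset.sum_apply, Pi.single_apply]
  calc QuadraticMap.polar Q x y = Q.polarBilin x y := (polarBilin_apply_apply Q x y).symm
    _ = Q.polarBilin (∑ k, x k • (Pi.single k 1 : Fin n → 𝔬))
          (∑ l, y l • (Pi.single l 1 : Fin n → 𝔬)) := by rw [← hrep, ← hrep]
    _ = ∑ k, ∑ l, x k * y l * gramPolar Q k l := by
        have e1 : Q.polarBilin (∑ k, x k • (Pi.single k 1 : Fin n → 𝔬)) =
            ∑ k, x k • Q.polarBilin (Pi.single k 1) := by
          rw [map_sum]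
          exact Finset.sum_congr rfl fun k _ => _root_.map_smul _ _ _
        rw [e1, LinearMap.sum_apply]
        refine Finset.sum_congr rfl fun k _ => ?_
        rw [LinearMap.smul_apply, map_sum, Finset.smul_sum]
        refine Finset.sum_congr rfl fun l _ => ?_
        rw [_root_.map_smul, smul_eq_mul, smul_eq_mul, polarBilin_apply_apply]
        simp only [gramPolar, Matrix.of_apply]
        ring

lemma mono_zero_iff {n : ℕ} {g : Fin n → ℕ} (hm : Monotone g) (i : Fin n) :
    g i = 0 ↔ (i : ℕ) < (Finset.univ.filter fun i => g i = 0).card := by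
  constructor
  · intro hi
    have hsub : Finset.Iic i ⊆ Finset.univ.filter fun j => g j = 0 := by
      intro j hj
      simp only [Finset.mem_filter, Finset.mem_univ, true_and]
      have := hm (Finset.mem_Iic.mp hj)
      omega
    have := Finset.card_le_card hsub
    rw [Fin.card_Iic] at this
    omega
  · intro hi
    by_contra hne
    have hsub : (Finset.univ.filter fun j => g j = 0) ⊆ Finset.Iio i := by
      intro j hj
      simp only [Finset.mem_filter, Finset.mem_univ, true_and] at hj
      rw [Finset.mem_Iio]
      by_contra hji
      push_neg at hji
      have := hm hji
      omega
    have := Finset.card_le_card hsub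
    rw [Fin.card_Iio] at this
    omega

lemma exists_basis_update {n : ℕ} (b : Basis (Fin n) 𝔬 (Fin n → 𝔬)) (x : Fin n → 𝔬) (j0 : Fin n)
    (hu : IsUnit (b.repr x j0)) :
    ∃ B : Basis (Fin n) 𝔬 (Fin n → 𝔬), ∀ j, B j = if j = j0 then x else b j := by
  classical
  have hmat : LinearMap.toMatrix b b (b.constr 𝔬 fun j => if j = j0 then x else b j) =
      (1 : Matrix (Fin n) (Fin n) 𝔬).updateCol j0 (fun i => b.repr x i) := by
    ext i j
    rw [LinearMap.toMatrix_apply, Basis.constr_basis]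
    by_cases h : j = j0
    · subst h
      rw [Matrix.updateCol_self, if_pos rfl]
    · rw [Matrix.updateCol_ne h, if_neg h, Basis.repr_self, Matrix.one_apply,
        Finsupp.single_apply]
      by_cases hij : i = j
      · subst hij
        simp
      · rw [if_neg (fun hh => hij hh.symm), if_neg hij]
  have hdet : IsUnit (LinearMap.toMatrix b b
      (b.constr 𝔬 fun j => if j = j0 then x else b j)).det := by
    rw [hmat, ← Matrix.cramer_apply, Matrix.cramer_one]
    simpa using hu
  refine ⟨b.map (LinearEquiv.ofIsUnitDet hdet), fun j => ?_⟩
  rw [Basis.map_apply]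
  have h2 : (LinearEquiv.ofIsUnitDet hdet) (b j) =
      (b.constr 𝔬 fun j => if j = j0 then x else b j) (b j) := by
    conv_lhs => rw [← LinearEquiv.coe_coe, LinearEquiv.coe_ofIsUnitDet]
  rw [h2, Basis.constr_basis]

variable [IsDomain 𝔬] [IsDiscreteValuationRing 𝔬]

lemma pow_dvd_of_sq_dvd {π : 𝔬} (hπ : Irreducible π) (k : ℕ) {x : 𝔬}
    (h : π ^ (2 * k) ∣ x ^ 2) : π ^ k ∣ x := by
  induction k generalizing x with
  | zero => simp
  | succ k ih =>
    have hp : Prime π := hπ.prime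
    have h1 : π ∣ x := hp.dvd_of_dvd_pow (dvd_trans (dvd_pow_self π (by omega)) h)
    obtain ⟨y, rfl⟩ := h1
    have h2 : π ^ 2 * π ^ (2 * k) ∣ π ^ 2 * y ^ 2 := by
      have hxy : (π * y) ^ 2 = π ^ 2 * y ^ 2 := by ring
      rw [hxy] at h
      convert h using 2
      ring
    have h3 : π ^ (2 * k) ∣ y ^ 2 :=
      (mul_dvd_mul_iff_left (pow_ne_zero 2 hp.ne_zero)).mp h2
    rw [pow_succ']
    exact mul_dvd_mul_left π (ih h3)

lemma gram_dvd_of_mem_GKSet {π : 𝔬} (hπ : Irreducible π) {n : ℕ}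
    (Q : QuadraticForm 𝔬 (Fin n → 𝔬)) {a : Fin n → ℕ} (ha : a ∈ GKSet π Q) :
    π ^ (∑ i, a i) ∣ (gramPolar Q).det := by
  classical
  obtain ⟨b, hmono, hQd, hPd⟩ := ha
  set A : Matrix (Fin n) (Fin n) 𝔬 := Matrix.of fun i k => b i k with hA
  set P : Matrix (Fin n) (Fin n) 𝔬 :=
    Matrix.of fun i j => QuadraticMap.polar Q (b i) (b j) with hP
  have hfact : P = A * gramPolar Q * A.transpose := by
    ext i j
    simp only [hP, Matrix.of_apply, Matrix.mul_apply, Matrix.transpose_apply, hA]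
    rw [polar_expand Q (b i) (b j), Finset.sum_comm]
    refine Finset.sum_congr rfl fun l _ => ?_
    rw [Finset.sum_mul]
    refine Finset.sum_congr rfl fun k _ => ?_
    ring
  have hAunit : IsUnit A.det := by
    have h1 : ((Pi.basisFun 𝔬 (Fin n)).toMatrix ⇑b) * (b.toMatrix ⇑(Pi.basisFun 𝔬 (Fin n))) = 1 :=
      Basis.toMatrix_mul_toMatrix_flip _ _
    have hAt : A = ((Pi.basisFun 𝔬 (Fin n)).toMatrix ⇑b).transpose := by
      ext i k
      simp [hA, Matrix.transpose_apply, Basis.toMatrix_apply, Pi.basisFun_repr]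
    rw [hAt, Matrix.det_transpose]
    exact IsUnit.of_mul_eq_one _ (by rw [← Matrix.det_mul, h1, Matrix.det_one])
  have hdvdP : π ^ (∑ i, a i) ∣ P.det := by
    rw [Matrix.det_apply]
    apply Finset.dvd_sum
    intro σ _
    have hterm : π ^ (∑ i, a i) ∣ ∏ i, P (σ i) i := by
      apply pow_dvd_of_sq_dvd hπ
      have h2 : (∏ i, P (σ i) i) ^ 2 = ∏ i, (P (σ i) i) ^ 2 := by
        rw [← Finset.prod_pow]
      rw [h2]
      have h3 : (π : 𝔬) ^ (2 * ∑ i, a i) = ∏ i, π ^ (a (σ i) + a i) := by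
        rw [Finset.prod_pow_eq_pow_sum]
        congr 1
        rw [Finset.sum_add_distrib, Equiv.sum_comp σ a]
        ring
      rw [h3]
      exact Finset.prod_dvd_prod_of_dvd _ _ fun i _ => hPd (σ i) i
    rcases Int.units_eq_one_or (Equiv.Perm.sign σ) with h | h <;> rw [h]
    · simpa using hterm
    · simpa using hterm
  rw [hfact, Matrix.det_mul, Matrix.det_mul, Matrix.det_transpose] at hdvdP
  obtain ⟨v, hv⟩ := (hAunit.mul hAunit).exists_left_inv
  have hG : (gramPolar Q).det = v * (A.det * (gramPolar Q).det * A.det) := by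
    rw [show A.det * (gramPolar Q).det * A.det = A.det * A.det * (gramPolar Q).det by ring,
      ← mul_assoc, hv, one_mul]
  rw [hG]
  exact Dvd.dvd.mul_left hdvdP v

lemma exists_greatest {π : 𝔬} (hπ : Irreducible π) {n : ℕ}
    {Q : QuadraticForm 𝔬 (Fin n → 𝔬)} (hQ : IsQuadLattice Q) :
    ∃ a ∈ GKSet π Q, ∀ c ∈ GKSet π Q, toLex c ≤ toLex a := by
  obtain ⟨K, u, hD⟩ := IsDiscreteValuationRing.eq_unit_mul_pow_irreducible hQ hπ
  have hbound : ∀ a ∈ GKSet π Q, ∀ i, a i ≤ K := by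
    intro a ha i
    have h1 : π ^ (∑ i, a i) ∣ (gramPolar Q).det := gram_dvd_of_mem_GKSet hπ Q ha
    have h2 : ∑ i, a i ≤ K := by
      by_contra hcon
      push_neg at hcon
      have h3 : π ^ (K + 1) ∣ (gramPolar Q).det :=
        dvd_trans (pow_dvd_pow π (by omega)) h1
      rw [hD] at h3
      obtain ⟨t, ht⟩ := h3
      have hπ0 : π ^ K ≠ 0 := pow_ne_zero _ hπ.ne_zero
      have hup : (u : 𝔬) = π * t := mul_left_cancel₀ hπ0 (by linear_combination ht)
      exact hπ.not_isUnit (isUnit_of_dvd_unit ⟨t, hup⟩ u.isUnit)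
    calc a i ≤ ∑ i, a i := Finset.single_le_sum (fun _ _ => Nat.zero_le _) (Finset.mem_univ i)
      _ ≤ K := h2
  have hfin : (GKSet π Q).Finite := by
    apply Set.Finite.subset (Set.Finite.pi fun _ : Fin n => Set.finite_Iic K)
    intro a ha
    rw [Set.mem_pi]
    exact fun i _ => hbound a ha i
  have hne : (GKSet π Q).Nonempty :=
    ⟨0, Pi.basisFun 𝔬 (Fin n), monotone_const, fun i => by simp, fun i j => by simp⟩
  have htri : ∀ x y : Lex (Fin n → ℕ), x < y ∨ x = y ∨ y < x :=
    fun x y => lt_trichotomy x y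
  obtain ⟨a, haS, hamax⟩ := Set.Finite.exists_maximalFor toLex _ hfin hne
  refine ⟨a, haS, fun c hcS => ?_⟩
  rcases htri (toLex c) (toLex a) with h | h | h
  · exact le_of_lt h
  · exact le_of_eq h
  · exact hamax hcS (le_of_lt h)

end S6Aux

/-- `a(L') = dim_κ (L'⊗κ)/Rad(L'⊗κ)` equals the number of zero
entries of `GK(L')`; equivalently `#Rad(L'⊗κ) = f^{n - #zeros(GK(L'))}`. -/
theorem statement_6 (π : 𝔬) (hπ : Irreducible π) {n : ℕ}
    (Q' : QuadraticForm 𝔬 (Fin n → 𝔬)) (hQ' : IsQuadLattice Q') :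
    Nat.card {v : (Fin n → 𝔬) ⧸ redSub π 1 (Fin n → 𝔬) // inRadC π Q' v} =
      Nat.card (IsLocalRing.ResidueField 𝔬) ^
        (n - (Finset.univ.filter fun i => GKinv π Q' i = 0).card) := by
  classical
  have hmax : ∃ a ∈ GKSet π Q', ∀ c ∈ GKSet π Q', toLex c ≤ toLex a := exists_greatest hπ hQ'
  have hgeq : GKinv π Q' = hmax.choose := by
    unfold GKinv
    rw [dif_pos hmax]
  set g : Fin n → ℕ := GKinv π Q' with hgdef
  have hgspec := hmax.choose_spec
  rw [← hgeq] at hgspec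
  obtain ⟨hgmem, hgmax⟩ := hgspec
  obtain ⟨b, hmono, hQd, hPd⟩ := hgmem
  set z := (Finset.univ.filter fun i => g i = 0).card with hzdef
  have hziff : ∀ i : Fin n, g i = 0 ↔ (i : ℕ) < z := mono_zero_iff hmono
  have hzn : z ≤ n := by
    calc z ≤ Finset.univ.card := Finset.card_filter_le _ _
      _ = n := by simp
  have hprime : Prime π := UniqueFactorizationMonoid.irreducible_iff_prime.mp hπ
  -- basis vectors past the zero entries lie in the radical preimage
  have hbM : ∀ j : Fin n, z ≤ (j : ℕ) → InM π Q' (b j) := by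
    intro j hj
    have hgj : g j ≠ 0 := fun h => by
      have := (hziff j).mp h
      omega
    refine InM.of_basis b _ (dvd_trans (dvd_pow_self π hgj) (hQd j)) fun k => ?_
    have h1 : π ∣ QuadraticMap.polar Q' (b j) (b k) ^ 2 :=
      dvd_trans (dvd_pow_self π (show g j + g k ≠ 0 by omega)) (hPd j k)
    exact hprime.dvd_of_dvd_pow h1
  -- residue field set-up
  have hρsurj : Function.Surjective (IsLocalRing.residue 𝔬) := IsLocalRing.residue_surjective
  set lf : IsLocalRing.ResidueField 𝔬 → 𝔬 := Function.surjInv hρsurj with hlfdef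
  have hlf : ∀ c, IsLocalRing.residue 𝔬 (lf c) = c := Function.surjInv_eq hρsurj
  have hρ0 : ∀ c : 𝔬, IsLocalRing.residue 𝔬 c = 0 ↔ π ∣ c := by
    intro c
    rw [IsLocalRing.residue_eq_zero_iff,
      (IsDiscreteValuationRing.irreducible_iff_uniformizer π).mp hπ, Ideal.mem_span_singleton]
  set emb : Fin (n - z) → Fin n := fun i => ⟨z + (i : ℕ), by omega⟩ with hembdef
  -- representation computations
  have hrepr : ∀ (d : Fin (n - z) → 𝔬) (i0 : Fin (n - z)),
      b.repr (∑ i, d i • b (emb i)) (emb i0) = d i0 := by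
    intro d i0
    rw [map_sum, Finset.sum_apply']
    rw [Finset.sum_eq_single i0]
    · rw [_root_.map_smul, Finsupp.smul_apply, Module.Basis.repr_self, Finsupp.single_apply,
        if_pos rfl, smul_eq_mul, mul_one]
    · intro i _ hne
      rw [_root_.map_smul, Finsupp.smul_apply, Module.Basis.repr_self, Finsupp.single_apply,
        if_neg, smul_eq_mul, mul_zero]
      intro hc
      apply hne
      have : z + (i : ℕ) = z + (i0 : ℕ) := congrArg Fin.val hc
      exact Fin.ext (by omega)
    · simp
  have hrepr0 : ∀ (d : Fin (n - z) → 𝔬) (j : Fin n), (j : ℕ) < z →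
      b.repr (∑ i, d i • b (emb i)) j = 0 := by
    intro d j hj
    rw [map_sum, Finset.sum_apply']
    apply Finset.sum_eq_zero
    intro i _
    rw [_root_.map_smul, Finsupp.smul_apply, Module.Basis.repr_self, Finsupp.single_apply,
      if_neg, smul_eq_mul, mul_zero]
    intro hc
    have : z + (i : ℕ) = (j : ℕ) := congrArg Fin.val hc
    omega
  -- the quotient-level radical membership
  have hmkrad : ∀ x : Fin n → 𝔬, InM π Q' x → inRadC π Q' (Submodule.Quotient.mk x) := by
    intro x hx x' hx'
    have hsub : x' - x ∈ redSub π 1 (Fin n → 𝔬) := (Submodule.Quotient.eq _).mp hx'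
    obtain ⟨u, hu⟩ := mem_redSub_iff.mp hsub
    have hx'eq : x' = π • u + x := sub_eq_iff_eq_add.mp hu
    have hInM : InM π Q' (π • u + x) := InM.add (InM.pi_smul u) hx
    rw [← hx'eq] at hInM
    exact hInM
  -- the bijection
  set xof : (Fin (n - z) → IsLocalRing.ResidueField 𝔬) → (Fin n → 𝔬) :=
    fun c => ∑ i, lf (c i) • b (emb i) with hxofdef
  have hxofM : ∀ c, InM π Q' (xof c) := fun c =>
    InM.sum _ _ fun i _ => InM.smul _ (hbM (emb i) (by simp [hembdef]))
  set Φ : (Fin (n - z) → IsLocalRing.ResidueField 𝔬) →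
      {v : (Fin n → 𝔬) ⧸ redSub π 1 (Fin n → 𝔬) // inRadC π Q' v} :=
    fun c => ⟨Submodule.Quotient.mk (xof c), hmkrad _ (hxofM c)⟩ with hΦdef
  have hΦinj : Function.Injective Φ := by
    intro c c' h
    have h1 : (Submodule.Quotient.mk (xof c) : (Fin n → 𝔬) ⧸ redSub π 1 (Fin n → 𝔬)) =
        Submodule.Quotient.mk (xof c') := congrArg Subtype.val h
    have h2 : xof c - xof c' ∈ redSub π 1 (Fin n → 𝔬) := (Submodule.Quotient.eq _).mp h1
    funext i0
    have h3 : π ∣ b.repr (xof c - xof c') (emb i0) := mem_redSub_iff_repr b h2 (emb i0)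
    have h4 : b.repr (xof c - xof c') (emb i0) = lf (c i0) - lf (c' i0) := by
      rw [map_sub, Finsupp.sub_apply, hxofdef]
      rw [hrepr (fun i => lf (c i)) i0, hrepr (fun i => lf (c' i)) i0]
    rw [h4] at h3
    have h5 := (hρ0 _).mpr h3
    rw [map_sub, hlf, hlf] at h5
    exact sub_eq_zero.mp h5
  have hΦsurj : Function.Surjective Φ := by
    rintro ⟨v, hv⟩
    obtain ⟨x, rfl⟩ := Submodule.Quotient.mk_surjective _ v
    have hx : InM π Q' x := ⟨(hv x rfl).1, (hv x rfl).2⟩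
    -- key claim from maximality of the Gross-Keating invariant
    have hc : ∀ j : Fin n, (j : ℕ) < z → π ∣ b.repr x j := by
      intro j0 hj0
      by_contra hnd
      have hcu : IsUnit (b.repr x j0) := by
        rw [← IsLocalRing.notMem_maximalIdeal,
          (IsDiscreteValuationRing.irreducible_iff_uniformizer π).mp hπ, Ideal.mem_span_singleton]
        exact hnd
      obtain ⟨B, hB⟩ := exists_basis_update b x j0 hcu
      have hzm : z - 1 < n := by omega
      set jz : Fin n := ⟨z - 1, hzm⟩ with hjzdef
      set sw := Equiv.swap j0 jz with hswdef
      set B' := B.reindex sw with hB'def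
      have hB' : ∀ i, B' i = B (sw i) := fun i => by
        rw [hB'def, Module.Basis.reindex_apply, hswdef, Equiv.symm_swap]
      have hkey : ∀ i : Fin n, z - 1 ≤ (i : ℕ) → InM π Q' (B' i) := by
        intro i hi
        rw [hB' i]
        by_cases hij : i = jz
        · subst hij
          rw [show sw jz = j0 from Equiv.swap_apply_right _ _, hB j0, if_pos rfl]
          exact hx
        · have hine : (i : ℕ) ≠ z - 1 := fun h => hij (Fin.ext h)
          have hiz : z ≤ (i : ℕ) := by omega
          have hij0 : i ≠ j0 := by
            intro h
            rw [h] at hiz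
            omega
          rw [show sw i = i from Equiv.swap_apply_of_ne_of_ne hij0 hij, hB i, if_neg hij0]
          exact hbM i hiz
      set a' : Fin n → ℕ := fun i => if z - 1 ≤ (i : ℕ) then 1 else 0 with ha'def
      have ha'mem : a' ∈ GKSet π Q' := by
        refine ⟨B', ?_, ?_, ?_⟩
        · intro i j hij
          have hvij : (i : ℕ) ≤ (j : ℕ) := hij
          simp only [ha'def]
          split_ifs <;> omega
        · intro i
          by_cases h : z - 1 ≤ (i : ℕ)
          · have hval : a' i = 1 := by
              simp only [ha'def]
              rw [if_pos h]
            rw [hval, pow_one]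
            exact (hkey i h).1
          · have hval : a' i = 0 := by
              simp only [ha'def]
              rw [if_neg h]
            rw [hval, pow_zero]
            exact one_dvd _
        · intro i j
          by_cases hi : z - 1 ≤ (i : ℕ)
          · have h1 : π ∣ QuadraticMap.polar Q' (B' i) (B' j) := (hkey i hi).2 _
            refine dvd_trans (pow_dvd_pow π ?_) (by rw [pow_two, pow_two]; exact mul_dvd_mul h1 h1)
            simp only [ha'def]
            split_ifs <;> omega
          · by_cases hj : z - 1 ≤ (j : ℕ)
            · have h1 : π ∣ QuadraticMap.polar Q' (B' j) (B' i) := (hkey j hj).2 _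
              rw [QuadraticMap.polar_comm] at h1
              refine dvd_trans (pow_dvd_pow π ?_) (by rw [pow_two, pow_two]; exact mul_dvd_mul h1 h1)
              simp only [ha'def]
              split_ifs <;> omega
            · have hv0 : a' i = 0 := by
                simp only [ha'def]
                rw [if_neg hi]
              have hv1 : a' j = 0 := by
                simp only [ha'def]
                rw [if_neg hj]
              rw [hv0, hv1, pow_zero]
              exact one_dvd _
      have hlex := hgmax a' ha'mem
      have hlt : toLex g < toLex a' := by
        refine ⟨jz, fun j hj => ?_, ?_⟩
        · have hjv : (j : ℕ) < z - 1 := hj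
          have hg0 : g j = 0 := (hziff j).mpr (by omega)
          have ha0 : a' j = 0 := by
            simp only [ha'def]
            rw [if_neg (by omega)]
          show g j = a' j
          rw [hg0, ha0]
        · have hgz : g jz = 0 := (hziff jz).mpr (by
            show z - 1 < z
            omega)
          show g jz < a' jz
          rw [hgz]
          simp only [ha'def]
          rw [if_pos (le_refl _)]
          omega
      exact absurd hlex (not_le_of_gt hlt)
    refine ⟨fun i => IsLocalRing.residue 𝔬 (b.repr x (emb i)), ?_⟩
    apply Subtype.ext
    show Submodule.Quotient.mk (xof _) = Submodule.Quotient.mk x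
    rw [Submodule.Quotient.eq]
    apply mem_redSub_of_repr b
    intro j
    rw [map_sub, Finsupp.sub_apply]
    by_cases hj : z ≤ (j : ℕ)
    · set i0 : Fin (n - z) := ⟨(j : ℕ) - z, by omega⟩ with hi0def
      have hembi0 : emb i0 = j := Fin.ext (by
        show z + ((j : ℕ) - z) = (j : ℕ)
        omega)
      rw [hxofdef, ← hembi0, hrepr]
      rw [← hρ0, map_sub, hlf, sub_self]
    · rw [hxofdef, hrepr0 _ j (by omega), zero_sub, dvd_neg]
      exact hc j (by omega)
  have hbij : Function.Bijective Φ := ⟨hΦinj, hΦsurj⟩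
  calc Nat.card {v : (Fin n → 𝔬) ⧸ redSub π 1 (Fin n → 𝔬) // inRadC π Q' v}
      = Nat.card (Fin (n - z) → IsLocalRing.ResidueField 𝔬) :=
        (Nat.card_eq_of_bijective Φ hbij).symm
    _ = Nat.card (IsLocalRing.ResidueField 𝔬) ^ (n - z) := by
        rw [Nat.card_pi, Finset.prod_const, Finset.card_univ, Fintype.card_fin]

end S6
end GKPaper
end

section
/- Let L be a free 𝔬-module of rank n with basis (e_1,…,e_n), let V = L ⊗_𝔬 F, let 1 ≤ d ≤ n, and let L^{(d,n)} ⊆ V be the lattice with basis (e_1,…,e_{n−d}, π^{−1}e_{n−d+1},…,π^{−1}e_n). Let L' be a lattice in V containing L. If L' contains no lattice L'' with L ⊆ L'' ⊆ L^{(d,n)} and [L'':L] = 1, then there exists an 𝔬-submodule M' of L' such that L' = M' ⊕ (𝔬e_{n−d+1} ⊕ ⋯ ⊕ 𝔬e_n) and L = (L' ∩ M') ⊕ (𝔬e_{n−d+1} ⊕ ⋯ ⊕ 𝔬e_n). -/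
namespace GKPaper

section S7

variable {𝔬 : Type*} [CommRing 𝔬] [IsDomain 𝔬] [IsDiscreteValuationRing 𝔬]
  [CharZero 𝔬] [Finite (IsLocalRing.ResidueField 𝔬)]
  [IsAdicComplete (IsLocalRing.maximalIdeal 𝔬) 𝔬]
  {F : Type*} [Field F] [Algebra 𝔬 F] [IsFractionRing 𝔬 F]

variable (𝔬) in
/-- The lattice `L^{(d,n)} ⊆ V` with basis
`(e_1, …, e_{n-d}, π⁻¹ e_{n-d+1}, …, π⁻¹ e_n)`. -/
noncomputable def upLat (π : 𝔬) (n d : ℕ) : Submodule 𝔬 (Fin n → F) :=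
  Submodule.span 𝔬 (Set.range fun i : Fin n =>
    if (i : ℕ) < n - d then (Pi.single i 1 : Fin n → F)
    else (algebraMap 𝔬 F π)⁻¹ • (Pi.single i 1 : Fin n → F))

variable (𝔬) in
/-- The sublattice `𝔬 e_{n-d+1} ⊕ ⋯ ⊕ 𝔬 e_n` of `L`. -/
noncomputable def tailLat (n d : ℕ) : Submodule 𝔬 (Fin n → F) :=
  Submodule.span 𝔬
    ((fun i : Fin n => (Pi.single i 1 : Fin n → F)) '' {i | n - d ≤ (i : ℕ)})

/-! ### Auxiliary material for statement 7 -/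

variable (𝔬 F) in
/-- Vectors with integral coordinates. -/
noncomputable def intLat (n : ℕ) : Submodule 𝔬 (Fin n → F) :=
  Submodule.pi Set.univ fun _ : Fin n => LinearMap.range (Algebra.linearMap 𝔬 F)

variable (𝔬 F) in
/-- Vectors supported in the last `d` coordinates. -/
def lowZero (n d : ℕ) : Submodule 𝔬 (Fin n → F) where
  carrier := {x | ∀ i : Fin n, (i : ℕ) < n - d → x i = 0}
  add_mem' := fun ha hb i hi => by simp [ha i hi, hb i hi]
  zero_mem' := fun i _ => rfl
  smul_mem' := fun c x hx i hi => by simp [hx i hi]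

lemma smul_pi_single {n : ℕ} (c : 𝔬) (i : Fin n) :
    c • (Pi.single i 1 : Fin n → F) = Pi.single i (algebraMap 𝔬 F c) := by
  funext j
  simp [Pi.single_apply, Algebra.smul_def, mul_ite]

lemma stdLat_eq (n : ℕ) : stdLat 𝔬 F n = intLat 𝔬 F n := by
  apply le_antisymm
  · rw [stdLat, Submodule.span_le]
    rintro _ ⟨i, rfl⟩ j -
    exact ⟨if j = i then 1 else 0, by simp [Pi.single_apply, apply_ite (algebraMap 𝔬 F)]⟩
  · intro x hx
    have hx' : ∀ i, ∃ c : 𝔬, algebraMap 𝔬 F c = x i := fun i => hx i (Set.mem_univ i)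
    choose c hc using hx'
    have : x = ∑ i, (c i) • (Pi.single i 1 : Fin n → F) := by
      conv_lhs => rw [← Finset.univ_sum_single x]
      refine Finset.sum_congr rfl fun i _ => ?_
      rw [smul_pi_single, hc i]
    rw [this]
    exact Submodule.sum_mem _ fun i _ =>
      Submodule.smul_mem _ _ (Submodule.subset_span ⟨i, rfl⟩)

lemma tailLat_eq (n d : ℕ) :
    tailLat 𝔬 (F := F) n d = intLat 𝔬 F n ⊓ lowZero 𝔬 F n d := by
  apply le_antisymm
  · rw [tailLat, Submodule.span_le]
    rintro _ ⟨i, hi, rfl⟩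
    have hi' : n - d ≤ (i : ℕ) := hi
    refine ⟨fun j _ => ⟨if j = i then 1 else 0,
      by simp [Pi.single_apply, apply_ite (algebraMap 𝔬 F)]⟩, fun j hj => ?_⟩
    have : j ≠ i := by rintro rfl; omega
    exact Pi.single_eq_of_ne this 1
  · rintro x ⟨hint, hzero⟩
    have hx' : ∀ i, ∃ c : 𝔬, algebraMap 𝔬 F c = x i := fun i => hint i (Set.mem_univ i)
    choose c hc using hx'
    have hxs : x = ∑ i, Pi.single i (x i) := (Finset.univ_sum_single x).symm
    rw [hxs]
    refine Submodule.sum_mem _ fun i _ => ?_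
    by_cases hi : (i : ℕ) < n - d
    · rw [hzero i hi]
      simp
    · have : Pi.single i (x i) = (c i) • (Pi.single i 1 : Fin n → F) := by
        rw [smul_pi_single, hc i]
      rw [this]
      exact Submodule.smul_mem _ _
        (Submodule.subset_span ⟨i, not_lt.mp hi, rfl⟩)

lemma tailLat_le_stdLat (n d : ℕ) : tailLat 𝔬 (F := F) n d ≤ stdLat 𝔬 F n := by
  rw [tailLat_eq, stdLat_eq]
  exact inf_le_left

lemma algebraMap_pi_ne_zero {π : 𝔬} (hπ : Irreducible π) : algebraMap 𝔬 F π ≠ 0 := by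
  intro h
  exact hπ.ne_zero (IsFractionRing.injective 𝔬 F (by rw [h, map_zero]))

lemma stdLat_le_upLat {π : 𝔬} (hπ : Irreducible π) (n d : ℕ) :
    stdLat 𝔬 F n ≤ upLat 𝔬 (F := F) π n d := by
  rw [stdLat, Submodule.span_le]
  rintro _ ⟨i, rfl⟩
  by_cases hi : (i : ℕ) < n - d
  · exact Submodule.subset_span ⟨i, by simp [hi]⟩
  · have hmem : (algebraMap 𝔬 F π)⁻¹ • (Pi.single i 1 : Fin n → F) ∈
        upLat 𝔬 (F := F) π n d := Submodule.subset_span ⟨i, by simp [hi]⟩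
    have := Submodule.smul_mem (upLat 𝔬 (F := F) π n d) π hmem
    rwa [← algebraMap_smul (A := F) π _, smul_inv_smul₀ (algebraMap_pi_ne_zero hπ)] at this

lemma mem_upLat_of_smul_mem_tailLat {π : 𝔬} (hπ : Irreducible π) {n d : ℕ}
    {x : Fin n → F} (hx : π • x ∈ tailLat 𝔬 (F := F) n d) :
    x ∈ upLat 𝔬 (F := F) π n d := by
  set g : (Fin n → F) →ₗ[𝔬] (Fin n → F) :=
    (LinearMap.lsmul F (Fin n → F) (algebraMap 𝔬 F π)⁻¹).restrictScalars 𝔬 with hg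
  have hmap : Submodule.map g (tailLat 𝔬 (F := F) n d) ≤ upLat 𝔬 (F := F) π n d := by
    rw [tailLat, Submodule.map_span, Submodule.span_le]
    rintro _ ⟨_, ⟨i, hi, rfl⟩, rfl⟩
    have hi' : n - d ≤ (i : ℕ) := hi
    refine Submodule.subset_span ⟨i, ?_⟩
    simp only [hg, LinearMap.coe_restrictScalars, LinearMap.lsmul_apply,
      if_neg (not_lt.mpr hi')]
  have hxg : x = g (π • x) := by
    simp only [hg, LinearMap.coe_restrictScalars, LinearMap.lsmul_apply]
    rw [← algebraMap_smul (A := F) π x, inv_smul_smul₀ (algebraMap_pi_ne_zero hπ)]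
  rw [hxg]
  exact hmap ⟨π • x, hx, rfl⟩

lemma span_F_stdLat (n : ℕ) :
    Submodule.span F ((stdLat 𝔬 F n : Set (Fin n → F))) = ⊤ := by
  rw [eq_top_iff]
  intro y _
  have hy : y = ∑ i, y i • (Pi.single i 1 : Fin n → F) := by
    conv_lhs => rw [← Finset.univ_sum_single y]
    refine Finset.sum_congr rfl fun i _ => ?_
    funext j
    simp [Pi.single_apply, mul_ite]
  rw [hy]
  exact Submodule.sum_mem _ fun i _ => Submodule.smul_mem _ _
    (Submodule.subset_span (Submodule.subset_span ⟨i, rfl⟩))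

lemma quotCard_eq_residue {π : 𝔬} (hπ : Irreducible π) {n : ℕ} {x : Fin n → F}
    (hx : x ∉ stdLat 𝔬 F n) (hπx : π • x ∈ stdLat 𝔬 F n) :
    quotCard F (stdLat 𝔬 F n) (stdLat 𝔬 F n ⊔ Submodule.span 𝔬 {x}) =
      Nat.card (IsLocalRing.ResidueField 𝔬) := by
  set L'' := stdLat 𝔬 F n ⊔ Submodule.span 𝔬 {x} with hL''
  have hxL'' : x ∈ L'' := Submodule.mem_sup_right (Submodule.mem_span_singleton_self x)
  set Q := ↥L'' ⧸ Submodule.comap L''.subtype (stdLat 𝔬 F n) with hQ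
  set φ : 𝔬 →ₗ[𝔬] Q :=
    (Submodule.comap L''.subtype (stdLat 𝔬 F n)).mkQ ∘ₗ
      LinearMap.toSpanSingleton 𝔬 ↥L'' ⟨x, hxL''⟩ with hφ
  have hφ_apply : ∀ c : 𝔬, φ c = Submodule.Quotient.mk (c • (⟨x, hxL''⟩ : ↥L'')) :=
    fun c => rfl
  have hsurj : Function.Surjective φ := by
    intro q
    obtain ⟨⟨y, hy⟩, rfl⟩ := Submodule.Quotient.mk_surjective _ q
    obtain ⟨s, hs, z, hz, hyz⟩ := Submodule.mem_sup.mp hy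
    obtain ⟨c, rfl⟩ := Submodule.mem_span_singleton.mp hz
    refine ⟨c, ?_⟩
    rw [hφ_apply]
    rw [Submodule.Quotient.eq]
    have : c • (⟨x, hxL''⟩ : ↥L'') - ⟨y, hy⟩ =
        ⟨c • x - y, sub_mem (Submodule.smul_mem _ _ hxL'') hy⟩ := rfl
    rw [this]
    have hmem : c • x - y ∈ stdLat 𝔬 F n := by
      rw [← hyz]
      simpa using Submodule.neg_mem _ hs
    exact hmem
  have hker : LinearMap.ker φ = Ideal.span {π} := by
    ext c
    rw [LinearMap.mem_ker, hφ_apply, Submodule.Quotient.mk_eq_zero,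
      Submodule.mem_comap, Ideal.mem_span_singleton]
    constructor
    · intro hc
      by_contra hdvd
      have hunit : IsUnit c := by
        by_contra hu
        exact hdvd (Ideal.mem_span_singleton.mp
          (hπ.maximalIdeal_eq ▸ (IsLocalRing.mem_maximalIdeal _).mpr (mem_nonunits_iff.mpr hu)))
      obtain ⟨u, rfl⟩ := hunit
      apply hx
      have : x = (↑u⁻¹ : 𝔬) • ((u : 𝔬) • x) := by
        rw [smul_smul, Units.inv_mul, one_smul]
      rw [this]
      exact Submodule.smul_mem _ _ hc
    · rintro ⟨e, rfl⟩
      have : (π * e) • x = e • (π • x) := by rw [mul_comm, mul_smul]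
      show (π * e) • x ∈ stdLat 𝔬 F n
      rw [this]
      exact Submodule.smul_mem _ _ hπx
  have equiv := φ.quotKerEquivOfSurjective hsurj
  rw [hker] at equiv
  have h1 : quotCard F (stdLat 𝔬 F n) L'' = Nat.card Q := rfl
  rw [h1, ← Nat.card_congr equiv.toEquiv]
  have h2 : IsLocalRing.ResidueField 𝔬 = (𝔬 ⧸ Ideal.span {π} : Type _) := by
    rw [IsLocalRing.ResidueField, hπ.maximalIdeal_eq]
  rw [h2]

lemma key_step {π : 𝔬} (hπ : Irreducible π) {n d : ℕ}
    {L' : Submodule 𝔬 (Fin n → F)} (hLL' : stdLat 𝔬 F n ≤ L')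
    (hno : ∀ L'' : Submodule 𝔬 (Fin n → F), IsLattice F L'' →
      stdLat 𝔬 F n ≤ L'' → L'' ≤ upLat 𝔬 (F := F) π n d → L'' ≤ L' →
      quotCard F (stdLat 𝔬 F n) L'' ≠ Nat.card (IsLocalRing.ResidueField 𝔬))
    {x : Fin n → F} (hxL' : x ∈ L') (hπx : π • x ∈ tailLat 𝔬 (F := F) n d) :
    x ∈ tailLat 𝔬 (F := F) n d := by
  by_cases hstd : x ∈ stdLat 𝔬 F n
  · rw [stdLat_eq] at hstd
    rw [tailLat_eq] at hπx ⊢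
    refine ⟨hstd, fun i hi => ?_⟩
    have h0 : (π • x) i = 0 := hπx.2 i hi
    rw [Pi.smul_apply, Algebra.smul_def] at h0
    exact (mul_eq_zero.mp h0).resolve_left (algebraMap_pi_ne_zero hπ)
  · exfalso
    set L'' := stdLat 𝔬 F n ⊔ Submodule.span 𝔬 {x} with hL''
    have hxup : x ∈ upLat 𝔬 (F := F) π n d := mem_upLat_of_smul_mem_tailLat hπ hπx
    refine hno L'' ⟨?_, ?_⟩ le_sup_left
      (sup_le (stdLat_le_upLat hπ n d) ((Submodule.span_le).mpr (by simpa using hxup)))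
      (sup_le hLL' ((Submodule.span_le).mpr (by simpa using hxL')))
      ?_
    · exact Submodule.FG.sup (Submodule.fg_span (Set.finite_range _))
        (Submodule.fg_span_singleton x)
    · rw [eq_top_iff, ← span_F_stdLat (𝔬 := 𝔬) n]
      exact Submodule.span_mono (SetLike.coe_subset_coe.mpr le_sup_left)
    · exact quotCard_eq_residue hπ hstd (tailLat_le_stdLat n d hπx)


/-- if a lattice `L' ⊇ L` contains no lattice `L''` with
`L ⊆ L'' ⊆ L^{(d,n)}` and `[L'':L] = 1` (i.e. `#(L''/L) = f`), then `L'` splits as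
`M' ⊕ (𝔬 e_{n-d+1} ⊕ ⋯ ⊕ 𝔬 e_n)` with `L = (L ∩ M') ⊕ (𝔬 e_{n-d+1} ⊕ ⋯ ⊕ 𝔬 e_n)`. -/
theorem statement_7 (π : 𝔬) (hπ : Irreducible π) {n d : ℕ} (hd1 : 1 ≤ d) (hdn : d ≤ n)
    (L' : Submodule 𝔬 (Fin n → F)) (hlat : IsLattice F L')
    (hLL' : stdLat 𝔬 F n ≤ L')
    (hno : ∀ L'' : Submodule 𝔬 (Fin n → F), IsLattice F L'' →
      stdLat 𝔬 F n ≤ L'' → L'' ≤ upLat 𝔬 (F := F) π n d → L'' ≤ L' →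
      quotCard F (stdLat 𝔬 F n) L'' ≠ Nat.card (IsLocalRing.ResidueField 𝔬)) :
    ∃ M' : Submodule 𝔬 (Fin n → F), M' ≤ L' ∧
      M' ⊔ tailLat 𝔬 (F := F) n d = L' ∧ M' ⊓ tailLat 𝔬 (F := F) n d = ⊥ ∧
      (stdLat 𝔬 F n ⊓ M') ⊔ tailLat 𝔬 (F := F) n d = stdLat 𝔬 F n ∧
      (stdLat 𝔬 F n ⊓ M') ⊓ tailLat 𝔬 (F := F) n d = ⊥ := by
  classical
  haveI : Module.Finite 𝔬 ↥L' := Module.Finite.iff_fg.mpr hlat.1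
  haveI : NoZeroSMulDivisors 𝔬 F :=
    ⟨fun {c x} h => by
      rw [Algebra.smul_def, mul_eq_zero] at h
      exact h.imp_left fun h => (map_eq_zero_iff _ (IsFractionRing.injective 𝔬 F)).mp h⟩
  haveI : Module.Free 𝔬 ↥L' := Module.free_of_finite_type_torsion_free'
  set T : Submodule 𝔬 ↥L' := (tailLat 𝔬 (F := F) n d).comap L'.subtype with hT
  obtain ⟨mrk, snf⟩ := T.smithNormalForm (Module.Free.chooseBasis 𝔬 ↥L')
  have hC : ∀ v : ↥L', π • v ∈ T → v ∈ T := by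
    intro v hv
    exact key_step hπ hLL' hno v.2 hv
  have hunit : ∀ i, IsUnit (snf.a i) := by
    intro i
    by_contra hu
    have hdvd : π ∣ snf.a i := Ideal.mem_span_singleton.mp
      (hπ.maximalIdeal_eq ▸ (IsLocalRing.mem_maximalIdeal _).mpr (mem_nonunits_iff.mpr hu))
    obtain ⟨c, hc⟩ := hdvd
    have hbn : (snf.bN i : ↥L') = π • (c • snf.bM (snf.f i)) := by
      rw [snf.snf i, hc, mul_smul]
    have hv : c • snf.bM (snf.f i) ∈ T := hC _ (by rw [← hbn]; exact (snf.bN i).2)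
    set w : ↥T := ⟨c • snf.bM (snf.f i), hv⟩ with hw
    have h1 : snf.bM.repr (w : ↥L') (snf.f i) = c := by
      simp [hw]
    have h2 := snf.repr_apply_embedding_eq_repr_smul (m := w) (i := i)
    have h3 : c = snf.a i * snf.bN.repr w i := by
      have h2' := h2
      rw [h1, LinearEquiv.map_smul, Finsupp.smul_apply, smul_eq_mul] at h2'
      exact h2'
    set r := snf.bN.repr w i with hr
    have hcne : c ≠ 0 := by
      rintro rfl
      apply snf.bN.ne_zero i
      have hz : (snf.bN i : ↥L') = 0 := by
        rw [snf.snf i, hc, mul_zero, zero_smul]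
      exact ZeroMemClass.coe_eq_zero.mp hz
    have hc0 : c * (1 - π * r) = 0 := by
      rw [hc] at h3
      linear_combination h3
    have h4 : (1 : 𝔬) - π * r = 0 := (mul_eq_zero.mp hc0).resolve_left hcne
    have h5 : π * r = 1 := by linear_combination -h4
    exact hπ.not_isUnit (IsUnit.of_mul_eq_one r h5)
  have hTspan : T = Submodule.span 𝔬 (⇑snf.bM '' Set.range snf.f) := by
    apply le_antisymm
    · intro t ht
      obtain ⟨c, rfl⟩ := snf.bN.mem_submodule_iff.mp ht
      rw [Finsupp.sum]
      refine Submodule.sum_mem _ fun j _ => Submodule.smul_mem _ _ ?_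
      rw [snf.snf j]
      exact Submodule.smul_mem _ _ (Submodule.subset_span ⟨snf.f j, ⟨j, rfl⟩, rfl⟩)
    · rw [Submodule.span_le]
      rintro _ ⟨_, ⟨i, rfl⟩, rfl⟩
      obtain ⟨u, hu⟩ := hunit i
      have heq : snf.bM (snf.f i) = (↑u⁻¹ : 𝔬) • ((snf.bN i : ↥L')) := by
        rw [snf.snf i, ← hu, smul_smul, Units.inv_mul, one_smul]
      rw [heq]
      exact Submodule.smul_mem _ _ (snf.bN i).2
  set M₀ : Submodule 𝔬 ↥L' := Submodule.span 𝔬 (⇑snf.bM '' (Set.range snf.f)ᶜ) with hM₀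
  have hsup : M₀ ⊔ T = ⊤ := by
    rw [hTspan, hM₀, ← Submodule.span_union, ← Set.image_union, Set.compl_union_self,
      Set.image_univ, Module.Basis.span_eq]
  have hdisj : M₀ ⊓ T = ⊥ := by
    rw [hTspan, hM₀]
    exact disjoint_iff.mp
      (snf.bM.linearIndependent.disjoint_span_image disjoint_compl_left)
  have htail_le : tailLat 𝔬 (F := F) n d ≤ L' := le_trans (tailLat_le_stdLat n d) hLL'
  have hmapT : T.map L'.subtype = tailLat 𝔬 (F := F) n d := by
    rw [hT, Submodule.map_comap_subtype]
    exact inf_eq_right.mpr htail_le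
  have h2 : M₀.map L'.subtype ⊔ tailLat 𝔬 (F := F) n d = L' := by
    rw [← hmapT, ← Submodule.map_sup, hsup, Submodule.map_top, Submodule.range_subtype]
  have h3 : M₀.map L'.subtype ⊓ tailLat 𝔬 (F := F) n d = ⊥ := by
    rw [← hmapT, ← Submodule.map_inf _ (Submodule.injective_subtype L'), hdisj,
      Submodule.map_bot]
  have h4 : (stdLat 𝔬 F n ⊓ M₀.map L'.subtype) ⊔ tailLat 𝔬 (F := F) n d = stdLat 𝔬 F n := by
    rw [inf_sup_assoc_of_le _ (tailLat_le_stdLat n d), h2, inf_eq_left.mpr hLL']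
  refine ⟨M₀.map L'.subtype, Submodule.map_subtype_le _ _, h2, h3, h4, ?_⟩
  exact eq_bot_iff.mpr (le_trans (inf_le_inf_right _ inf_le_right) h3.le)

end S7
end GKPaper
end

section
/- Let X = [[a,b],[b,c]] be a nondegenerate half-integral symmetric 2×2 matrix over ℤ_2 (a, c ∈ ℤ_2, 2b ∈ ℤ_2) whose associated binary quadratic form is anisotropic over ℚ_2, and suppose GK(X) = (a_1, a_1+2t) for some t ≥ 0. If X is optimal, then ord(a) = a_1, ord(2b) = a_1 + t, and ord(c) = a_1 + 2t. Consequently, every optimal Gram matrix of an anisotropic quadratic ℤ_2-lattice of rank 2 is a reduced form. -/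
namespace GKPaper

section Mat2

open scoped Matrix

/-- `B` is half-integral over `ℤ₂`: diagonal entries and doubled off-diagonal
entries lie in `ℤ₂`. -/
def HalfInt {n : ℕ} (B : Matrix (Fin n) (Fin n) ℚ_[2]) : Prop :=
  (∀ i, ‖B i i‖ ≤ 1) ∧ ∀ i j, ‖2 * B i j‖ ≤ 1

/-- `S(B)`: non-decreasing `a` with `ord(b_ii) ≥ a_i` and `ord(2 b_ij) ≥ (a_i + a_j)/2`. -/
def SMat {n : ℕ} (B : Matrix (Fin n) (Fin n) ℚ_[2]) : Set (Fin n → ℕ) :=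
  {a | Monotone a ∧ (∀ i, ‖B i i‖ ≤ (2 : ℝ) ^ (-(a i : ℤ))) ∧
    ∀ i j, ‖2 * B i j‖ ^ 2 ≤ (2 : ℝ) ^ (-((a i + a j : ℕ) : ℤ))}

/-- `𝐒({B}) = ⋃_{U ∈ GL_n(ℤ₂)} S(ᵗU B U)`. -/
def GKSetMat {n : ℕ} (B : Matrix (Fin n) (Fin n) ℚ_[2]) : Set (Fin n → ℕ) :=
  {a | ∃ U : Matrix (Fin n) (Fin n) ℚ_[2],
    (∀ i j, ‖U i j‖ ≤ 1) ∧ ‖U.det‖ = 1 ∧ a ∈ SMat (Uᵀ * B * U)}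

open Classical in
/-- The Gross–Keating invariant of the half-integral symmetric matrix `B`:
the greatest element of `𝐒({B})` in the lexicographic order. -/
noncomputable def GKMat {n : ℕ} (B : Matrix (Fin n) (Fin n) ℚ_[2]) : Fin n → ℕ :=
  if h : ∃ a ∈ GKSetMat B, ∀ c ∈ GKSetMat B, toLex c ≤ toLex a then h.choose
  else fun _ => 0

/-- `B` is optimal: `GK(B) ∈ S(B)`. -/
noncomputable def OptimalMat {n : ℕ} (B : Matrix (Fin n) (Fin n) ℚ_[2]) : Prop :=
  GKMat B ∈ SMat B

/-- The quadratic form of `B` is anisotropic over `ℚ₂`. -/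
def AnisoMat {n : ℕ} (B : Matrix (Fin n) (Fin n) ℚ_[2]) : Prop :=
  ∀ v : Fin n → ℚ_[2], v ≠ 0 → dotProduct v (B.mulVec v) ≠ 0

/-- `B` is a reduced form of GK-type `(a, σ)` (matrix version of
Ikeda–Katsurada, Definition 3.2). -/
noncomputable def ReducedMat {n : ℕ} (B : Matrix (Fin n) (Fin n) ℚ_[2])
    (a : Fin n → ℕ) (σ : Equiv.Perm (Fin n)) : Prop :=
  Admissible a σ ∧ a ∈ SMat B ∧
  (∀ i, σ i ≠ i → a i ≤ a (σ i) →
    GKMat (B.submatrix ![i, σ i] ![i, σ i]) = ![a i, a (σ i)]) ∧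
  (∀ i, σ i = i → ‖B i i‖ = (2 : ℝ) ^ (-(a i : ℤ))) ∧
  (∀ i j, j ≠ i → j ≠ σ i →
    ‖2 * B i j‖ ^ 2 < (2 : ℝ) ^ (-((a i + a j : ℕ) : ℤ)))

/-- `B` is a reduced form. -/
noncomputable def IsReducedMat {n : ℕ} (B : Matrix (Fin n) (Fin n) ℚ_[2]) : Prop :=
  ∃ σ : Equiv.Perm (Fin n), ReducedMat B (GKMat B) σ


section AuxNorm

private lemma norm2Q : ‖(2:ℚ_[2])‖ = 1/2 := by
  have := @Padic.norm_p 2 _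
  norm_num at this ⊢
  exact_mod_cast this

private lemma pow2le {m n : ℤ} (h : n ≤ m) : (2:ℝ)^(-m) ≤ (2:ℝ)^(-n) :=
  zpow_le_zpow_right₀ (by norm_num) (by omega)

private lemma pow2pos (n : ℤ) : (0:ℝ) < (2:ℝ)^(-n) := zpow_pos (by norm_num) _

private lemma pow2_succ (n : ℤ) : (2:ℝ)^(-(n+1)) = (1/2) * (2:ℝ)^(-n) := by
  have h : -(n+1) = (-1) + -n := by ring
  rw [h, zpow_add₀ (by norm_num : (2:ℝ) ≠ 0)]
  norm_num

private lemma pow2_add (m n : ℤ) : (2:ℝ)^(-(m+n)) = (2:ℝ)^(-m) * (2:ℝ)^(-n) := by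
  rw [show -(m+n) = -m + -n by ring, zpow_add₀ (by norm_num : (2:ℝ) ≠ 0)]

private lemma norm_step (x : ℚ_[2]) {n : ℤ} (h : ‖x‖ ≤ (2:ℝ)^(-n)) (hne : ‖x‖ ≠ (2:ℝ)^(-n)) :
    ‖x‖ ≤ (2:ℝ)^(-(n+1)) := by
  have h2 : ‖x‖ < (2:ℝ)^(-n) := lt_of_le_of_ne h hne
  have h3 := (Padic.norm_lt_pow_iff_norm_le_pow_sub_one x (-n)).mp (by exact_mod_cast h2)
  have e : (-n - 1 : ℤ) = -(n+1) := by ring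
  rw [e] at h3
  exact_mod_cast h3

private lemma norm_sq_le_iff (x : ℚ_[2]) (m : ℤ) :
    ‖x‖^2 ≤ (2:ℝ)^(-(2*m)) ↔ ‖x‖ ≤ (2:ℝ)^(-m) := by
  have h : (2:ℝ)^(-(2*m)) = ((2:ℝ)^(-m))^2 := by
    rw [← zpow_natCast ((2:ℝ)^(-m)) 2, ← zpow_mul]; ring_nf
  rw [h]
  exact pow_le_pow_iff_left₀ (norm_nonneg x) (le_of_lt (pow2pos _)) (by norm_num)

private lemma sq_parity (x : ℚ_[2]) (k : ℕ) (hk : k % 2 = 1)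
    (h : ‖x‖^2 ≤ (2:ℝ)^(-(k:ℤ))) : ‖x‖^2 ≤ (2:ℝ)^(-((k:ℤ)+1)) := by
  by_cases hx : x = 0
  · have hz : ‖x‖^2 = 0 := by simp [hx]
    rw [hz]
    positivity
  · have hv : ‖x‖ = (2:ℝ) ^ (-x.valuation) := by
      have := Padic.norm_eq_zpow_neg_valuation hx
      exact_mod_cast this
    have hsq : ‖x‖^2 = (2:ℝ) ^ (-(2*x.valuation)) := by
      rw [hv, ← zpow_natCast ((2:ℝ)^(-x.valuation)) 2, ← zpow_mul]; ring_nf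
    rw [hsq] at h ⊢
    have h1 : (k:ℤ) ≤ 2*x.valuation := by
      have := (zpow_le_zpow_iff_right₀ (by norm_num : (1:ℝ) < 2)).mp h
      omega
    apply pow2le
    omega

private lemma half_norm (x : ℚ_[2]) : ‖2*x‖ = (1/2) * ‖x‖ := by
  rw [norm_mul, norm2Q]

private lemma norm_sub_ultra (x y : ℚ_[2]) : ‖x - y‖ ≤ max ‖x‖ ‖y‖ := by
  have : x - y = x + (-y) := by ring
  rw [this]
  refine le_trans (Padic.nonarchimedean _ _) ?_
  rw [norm_neg]

private lemma exists_sq_near_one (u : ℚ_[2]) (hu : ‖u - 1‖ ≤ (2:ℝ)^(-(3:ℤ))) :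
    ∃ s : ℚ_[2], s * s = u := by
  have hu1 : ‖u‖ ≤ 1 := by
    have h : u = (u - 1) + 1 := by ring
    rw [h]
    refine le_trans (Padic.nonarchimedean _ _) ?_
    simp only [norm_one]
    refine max_le (le_trans hu (by norm_num)) le_rfl
  set U : ℤ_[2] := ⟨u, hu1⟩ with hU
  let F : Polynomial ℤ_[2] := Polynomial.X ^ 2 - Polynomial.C U
  have heval : F.eval 1 = 1 - U := by simp [F]
  have hderiv : F.derivative.eval 1 = 2 := by
    simp [F, Polynomial.derivative_sub, Polynomial.derivative_X_pow]; norm_num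
  have hnorm2 : ‖(2 : ℤ_[2])‖ = 1/2 := by
    have := @PadicInt.norm_p 2 _
    norm_num at this ⊢
    exact_mod_cast this
  have hlt : ‖F.eval 1‖ < ‖F.derivative.eval 1‖ ^ 2 := by
    rw [heval, hderiv, hnorm2]
    have h2 : ‖(1 - U : ℤ_[2])‖ = ‖u - 1‖ := by
      have hcoeU : (U : ℚ_[2]) = u := rfl
      rw [PadicInt.norm_def, ← norm_neg]
      congr 1
      push_cast [hcoeU]
      ring
    rw [h2]
    calc ‖u - 1‖ ≤ (2:ℝ)^(-(3:ℤ)) := hu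
    _ < (1/2)^2 := by norm_num
  obtain ⟨z, hz, -⟩ := hensels_lemma hlt
  refine ⟨(z : ℚ_[2]), ?_⟩
  have hz2 : z ^ 2 = U := by
    have h := hz
    simp [F, sub_eq_zero] at h
    exact h
  have h := congrArg (fun w : ℤ_[2] => (w : ℚ_[2])) hz2
  push_cast at h
  calc (z:ℚ_[2]) * z = ((z^2 : ℤ_[2]) : ℚ_[2]) := by push_cast; ring
  _ = u := by rw [hz2]

private lemma one_add_unit (z : ℚ_[2]) (hz : ‖z‖ = 1) : ‖1 + z‖ ≤ 1/2 := by
  set Z : ℤ_[2] := ⟨z, hz.le⟩ with hZ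
  have hcoe : ‖1 + z‖ = ‖(1 + Z : ℤ_[2])‖ := by rw [PadicInt.norm_def]; push_cast [hZ]; rfl
  rw [hcoe]
  have hunit : IsUnit Z := PadicInt.isUnit_iff.mpr (by rw [PadicInt.norm_def]; exact hz)
  have h1 : (PadicInt.toZMod (1 + Z) : ZMod 2) = 0 := by
    have hu : IsUnit (PadicInt.toZMod Z) := hunit.map _
    have hall : ∀ w : ZMod 2, w ≠ 0 → w = 1 := by decide
    have h2 : (PadicInt.toZMod Z : ZMod 2) = 1 := hall _ hu.ne_zero
    rw [map_add, map_one, h2]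
    decide
  have hdvd : (2 : ℤ_[2]) ∣ (1 + Z) := by
    have hker : (1 + Z) ∈ RingHom.ker (PadicInt.toZMod : ℤ_[2] →+* ZMod 2) := h1
    rw [PadicInt.ker_toZMod, PadicInt.maximalIdeal_eq_span_p, Ideal.mem_span_singleton] at hker
    exact_mod_cast hker
  obtain ⟨w, hw⟩ := hdvd
  rw [hw, norm_mul]
  have hnorm2 : ‖(2 : ℤ_[2])‖ = 1/2 := by
    have := @PadicInt.norm_p 2 _
    norm_num at this ⊢
    exact_mod_cast this
  rw [hnorm2]
  calc (1/2 : ℝ) * ‖w‖ ≤ (1/2) * 1 := by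
        nlinarith [PadicInt.norm_le_one w, norm_nonneg w]
  _ = 1/2 := by norm_num

private lemma norm_add_le_half (x y : ℚ_[2]) (hx : x ≠ 0) (h : ‖x‖ = ‖y‖) :
    ‖x + y‖ ≤ (1/2) * ‖x‖ := by
  have hx0 : ‖x‖ ≠ 0 := by simpa using hx
  have h1 : ‖y/x‖ = 1 := by rw [norm_div, ← h, div_self hx0]
  have h2 : x + y = x * (1 + y/x) := by field_simp
  rw [h2, norm_mul]
  have := one_add_unit (y/x) h1
  nlinarith [norm_nonneg x]

private lemma exists_sqrt_disc (x y : ℚ_[2]) (hx : x ≠ 0)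
    (h : ‖y‖ ≤ (2:ℝ)^(-(3:ℤ)) * ‖x‖^2) : ∃ s : ℚ_[2], s*s = x^2 - y := by
  have hx2 : x^2 ≠ 0 := pow_ne_zero _ hx
  have hnx2 : ‖x^2‖ ≠ 0 := by simpa using hx2
  have hbnd : ‖(1 - y/x^2) - 1‖ ≤ (2:ℝ)^(-(3:ℤ)) := by
    have he : 1 - y/x^2 - 1 = -(y/x^2) := by ring
    rw [he, norm_neg, norm_div]
    rw [div_le_iff₀ (lt_of_le_of_ne (norm_nonneg _) (Ne.symm hnx2))]
    calc ‖y‖ ≤ (2:ℝ)^(-(3:ℤ)) * ‖x‖^2 := h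
    _ = (2:ℝ)^(-(3:ℤ)) * ‖x^2‖ := by rw [norm_pow]
  obtain ⟨s₀, hs₀⟩ := exists_sq_near_one (1 - y/x^2) hbnd
  refine ⟨x * s₀, ?_⟩
  calc (x*s₀)*(x*s₀) = x^2 * (s₀ * s₀) := by ring
  _ = x^2 * (1 - y/x^2) := by rw [hs₀]
  _ = x^2 - y := by field_simp

end AuxNorm

section AuxMat

open Matrix

private lemma aniso_a_ne {a b c : ℚ_[2]} (han : AnisoMat !![a,b;b,c]) : a ≠ 0 := by
  intro ha
  apply han ![1, 0] (by
    intro h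
    have := congrFun h 0
    simp at this)
  simp [dotProduct, Matrix.mulVec, Fin.sum_univ_two, ha]

private lemma aniso_disc {a b c : ℚ_[2]} (han : AnisoMat !![a,b;b,c])
    (s : ℚ_[2]) (hs : s*s = (2*b)^2 - 4*(a*c)) : False := by
  have ha : a ≠ 0 := aniso_a_ne han
  have ha2 : (2:ℚ_[2]) * a ≠ 0 := by
    simp [ha]
  apply han ![s - 2*b, 2*a] (by
    intro h
    have h1 := congrFun h 1
    simp at h1
    exact ha h1)
  have hdot : dotProduct ![s - 2*b, 2*a] ((!![a,b;b,c]).mulVec ![s - 2*b, 2*a])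
      = a * (s*s - ((2*b)^2 - 4*(a*c))) := by
    simp [dotProduct, Matrix.mulVec, Fin.sum_univ_two]
    ring
  rw [hdot, hs]
  ring

private lemma lex_le_iff (d e : Fin 2 → ℕ) :
    toLex d ≤ toLex e ↔ d 0 < e 0 ∨ (d 0 = e 0 ∧ d 1 ≤ e 1) := by
  constructor
  · intro h
    rcases lt_or_eq_of_le h with h | h
    · have h' : Pi.Lex (· < ·) (@fun _ => (· < ·)) d e := h
      obtain ⟨i, hj, hi⟩ := h'
      fin_cases i
      · exact Or.inl hi
      · exact Or.inr ⟨hj 0 (by decide), le_of_lt hi⟩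
    · have he : d = e := by
        have := toLex_inj.mp h
        exact this
      exact Or.inr ⟨congrFun he 0, le_of_eq (congrFun he 1)⟩
  · rintro (h | ⟨h0, h1⟩)
    · refine le_of_lt ?_
      exact (⟨0, fun j hj => absurd hj (by fin_cases j <;> simp), h⟩ :
        Pi.Lex (· < ·) (@fun _ => (· < ·)) d e)
    · rcases lt_or_eq_of_le h1 with h1 | h1
      · refine le_of_lt ?_
        refine (⟨1, fun j hj => ?_, h1⟩ : Pi.Lex (· < ·) (@fun _ => (· < ·)) d e)
        fin_cases j
        · exact h0
        · exact absurd hj (lt_irrefl _)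
      · have he : d = e := funext fun i => by fin_cases i <;> assumption
        exact le_of_eq (congrArg toLex he)

private lemma mem_gkset {B U : Matrix (Fin 2) (Fin 2) ℚ_[2]}
    (hU : ∀ i j, ‖U i j‖ ≤ 1) (hUdet : ‖U.det‖ = 1) {d : Fin 2 → ℕ}
    (hd : d ∈ SMat (Uᵀ * B * U)) : d ∈ GKSetMat B := ⟨U, hU, hUdet, hd⟩

private lemma mem_gkset_id {B : Matrix (Fin 2) (Fin 2) ℚ_[2]} {d : Fin 2 → ℕ}
    (hd : d ∈ SMat B) : d ∈ GKSetMat B := by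
  refine ⟨1, ?_, by simp, ?_⟩
  · intro i j
    fin_cases i <;> fin_cases j <;> simp [Matrix.one_apply]
  · rw [Matrix.transpose_one, Matrix.one_mul, Matrix.mul_one]
    exact hd

private lemma diag_sq {w : ℚ_[2]} {m : ℕ} (h : ‖w‖ ≤ (2:ℝ)^(-(m:ℤ))) :
    ‖2*w‖^2 ≤ (2:ℝ)^(-((m+m:ℕ):ℤ)) := by
  have h1 : ‖2*w‖ ≤ (2:ℝ)^(-(m:ℤ)) := by
    rw [half_norm]
    nlinarith [norm_nonneg w, pow2pos (m:ℤ)]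
  have h2 : ((m+m:ℕ):ℤ) = (m:ℤ) + (m:ℤ) := by push_cast; ring
  rw [h2, pow2_add]
  calc ‖2*w‖^2 ≤ ((2:ℝ)^(-(m:ℤ)))^2 :=
    pow_le_pow_left₀ (norm_nonneg _) h1 2
  _ = (2:ℝ)^(-(m:ℤ)) * (2:ℝ)^(-(m:ℤ)) := by ring

private lemma mem_SMat {x y z : ℚ_[2]} {d0 d1 : ℕ} (hmono : d0 ≤ d1)
    (h0 : ‖x‖ ≤ (2:ℝ)^(-(d0:ℤ))) (h1 : ‖z‖ ≤ (2:ℝ)^(-(d1:ℤ)))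
    (h01 : ‖2*y‖^2 ≤ (2:ℝ)^(-((d0+d1:ℕ):ℤ))) : ![d0,d1] ∈ SMat !![x,y;y,z] := by
  refine ⟨?_, ?_, ?_⟩
  · intro i j hij
    fin_cases i <;> fin_cases j
    · exact le_rfl
    · simpa using hmono
    · exact absurd hij (by decide)
    · exact le_rfl
  · intro i
    fin_cases i
    · simpa using h0
    · simpa using h1
  · intro i j
    fin_cases i <;> fin_cases j
    · simpa using diag_sq h0
    · simpa using h01
    · have h01' : ‖2*y‖^2 ≤ (2:ℝ)^(-((d1+d0:ℕ):ℤ)) := by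
        rwa [Nat.add_comm d1 d0]
      simpa using h01'
    · simpa using diag_sq h1

private lemma trans_lit (p q r s : ℚ_[2]) : (!![p,q;r,s])ᵀ = !![p,r;q,s] := by
  ext i j
  fin_cases i <;> fin_cases j <;> rfl

private lemma shear_conj (a b c μ : ℚ_[2]) :
    (!![1,μ;0,1] : Matrix (Fin 2) (Fin 2) ℚ_[2])ᵀ * !![a,b;b,c] * !![1,μ;0,1]
      = !![a, a*μ+b; a*μ+b, a*μ^2+2*b*μ+c] := by
  rw [trans_lit, Matrix.mul_fin_two, Matrix.mul_fin_two]
  ext i j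
  fin_cases i <;> fin_cases j <;> simp <;> ring

private lemma shear_unimod (μ : ℚ_[2]) (hμ : ‖μ‖ ≤ 1) :
    (∀ i j, ‖(!![1,μ;0,1] : Matrix (Fin 2) (Fin 2) ℚ_[2]) i j‖ ≤ 1) ∧
      ‖(!![1,μ;0,1] : Matrix (Fin 2) (Fin 2) ℚ_[2]).det‖ = 1 := by
  constructor
  · intro i j
    fin_cases i <;> fin_cases j <;> simp [hμ]
  · rw [Matrix.det_fin_two_of]
    norm_num

private lemma swap_conj (x y z : ℚ_[2]) :
    (!![0,1;1,0] : Matrix (Fin 2) (Fin 2) ℚ_[2])ᵀ * !![x,y;y,z] * !![0,1;1,0]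
      = !![z,y;y,x] := by
  rw [trans_lit, Matrix.mul_fin_two, Matrix.mul_fin_two]
  ext i j
  fin_cases i <;> fin_cases j <;> simp

private lemma swap_unimod :
    (∀ i j, ‖(!![0,1;1,0] : Matrix (Fin 2) (Fin 2) ℚ_[2]) i j‖ ≤ 1) ∧
      ‖(!![0,1;1,0] : Matrix (Fin 2) (Fin 2) ℚ_[2]).det‖ = 1 := by
  constructor
  · intro i j
    fin_cases i <;> fin_cases j <;> simp
  · rw [Matrix.det_fin_two_of]
    norm_num

private lemma gkset_bound {B : Matrix (Fin 2) (Fin 2) ℚ_[2]} (hsym : Bᵀ = B)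
    (d : Fin 2 → ℕ) (hd : d ∈ GKSetMat B) :
    ‖B.det‖ / 4 ≤ (2:ℝ)^(-((d 0 + d 1 : ℕ):ℤ)) := by
  obtain ⟨U, hU, hUdet, hmono, hdiag, hoff⟩ := hd
  set B' := Uᵀ * B * U with hB'
  have hsym' : B' 1 0 = B' 0 1 := by
    have h : B'ᵀ = B' := by
      rw [hB', Matrix.transpose_mul, Matrix.transpose_mul,
        Matrix.transpose_transpose, hsym, Matrix.mul_assoc]
    calc B' 1 0 = B'ᵀ 0 1 := rfl
    _ = B' 0 1 := by rw [h]
  have hdet' : ‖B'.det‖ = ‖B.det‖ := by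
    rw [hB', Matrix.det_mul, Matrix.det_mul, Matrix.det_transpose,
      norm_mul, norm_mul, hUdet]
    ring
  have h4 : (4:ℚ_[2]) * B'.det = (2*B' 0 0) * (2*B' 1 1) - (2*B' 0 1)*(2*B' 1 0) := by
    rw [Matrix.det_fin_two]; ring
  have hn4 : ‖(4:ℚ_[2])‖ = 1/4 := by
    have : (4:ℚ_[2]) = 2*2 := by norm_num
    rw [this, norm_mul, norm2Q]; norm_num
  have hb00 : ‖2*B' 0 0‖ ≤ (2:ℝ)^(-(d 0:ℤ)) := by
    rw [half_norm]
    nlinarith [hdiag 0, norm_nonneg (B' 0 0), pow2pos (d 0:ℤ)]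
  have hb11 : ‖2*B' 1 1‖ ≤ (2:ℝ)^(-(d 1:ℤ)) := by
    rw [half_norm]
    nlinarith [hdiag 1, norm_nonneg (B' 1 1), pow2pos (d 1:ℤ)]
  have hterm1 : ‖(2*B' 0 0) * (2*B' 1 1)‖ ≤ (2:ℝ)^(-((d 0 + d 1:ℕ):ℤ)) := by
    rw [norm_mul]
    have he : ((d 0 + d 1:ℕ):ℤ) = (d 0:ℤ) + (d 1:ℤ) := by push_cast; ring
    rw [he, pow2_add]
    exact mul_le_mul hb00 hb11 (norm_nonneg _) (le_of_lt (pow2pos _))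
  have hterm2 : ‖(2*B' 0 1) * (2*B' 1 0)‖ ≤ (2:ℝ)^(-((d 0 + d 1:ℕ):ℤ)) := by
    rw [hsym', norm_mul, ← pow_two]
    exact hoff 0 1
  have hfinal : ‖(4:ℚ_[2]) * B'.det‖ ≤ (2:ℝ)^(-((d 0 + d 1:ℕ):ℤ)) := by
    rw [h4]
    exact le_trans (norm_sub_ultra _ _) (max_le hterm1 hterm2)
  rw [norm_mul, hn4, hdet'] at hfinal
  linarith

private lemma gk_max_exists {B : Matrix (Fin 2) (Fin 2) ℚ_[2]} (hB : HalfInt B)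
    (hsym : Bᵀ = B) (hdet : B.det ≠ 0) :
    ∃ a ∈ GKSetMat B, ∀ c ∈ GKSetMat B, toLex c ≤ toLex a := by
  have hz : (fun _ => 0) ∈ GKSetMat B := by
    apply mem_gkset_id
    refine ⟨monotone_const, ?_, ?_⟩
    · intro i
      simpa using hB.1 i
    · intro i j
      have h := hB.2 i j
      have : ‖2 * B i j‖^2 ≤ 1 := by nlinarith [norm_nonneg (2 * B i j)]
      simpa using this
  have hpos : 0 < ‖B.det‖ / 4 := by
    have : 0 < ‖B.det‖ := norm_pos_iff.mpr hdet
    linarith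
  obtain ⟨K, hK⟩ : ∃ K : ℕ, (2:ℝ)^(-(K:ℤ)) < ‖B.det‖/4 := by
    obtain ⟨n, hn⟩ := exists_pow_lt_of_lt_one hpos (by norm_num : (1/2:ℝ) < 1)
    refine ⟨n, ?_⟩
    have he : (2:ℝ)^(-(n:ℤ)) = (1/2:ℝ)^n := by
      rw [_root_.zpow_neg, zpow_natCast, ← inv_pow]
      norm_num
    rw [he]; exact hn
  have hbd : ∀ d ∈ GKSetMat B, d 0 ≤ K ∧ d 1 ≤ K := by
    intro d hd
    have h1 := gkset_bound hsym d hd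
    have h2 : (2:ℝ)^(-(K:ℤ)) < (2:ℝ)^(-((d 0 + d 1:ℕ):ℤ)) := lt_of_lt_of_le hK h1
    have h3 : -(K:ℤ) < -((d 0 + d 1:ℕ):ℤ) :=
      (zpow_lt_zpow_iff_right₀ (by norm_num : (1:ℝ) < 2)).mp h2
    omega
  -- two-step argmax
  set T0 : Set ℕ := {n | ∃ d ∈ GKSetMat B, d 0 = n} with hT0
  have hT0ne : T0.Nonempty := ⟨0, (fun _ => 0), hz, rfl⟩
  have hT0bd : BddAbove T0 := ⟨K, by rintro n ⟨d, hd, rfl⟩; exact (hbd d hd).1⟩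
  set M0 := sSup T0 with hM0
  have hM0mem : M0 ∈ T0 := Nat.sSup_mem hT0ne hT0bd
  set T1 : Set ℕ := {n | ∃ d ∈ GKSetMat B, d 0 = M0 ∧ d 1 = n} with hT1
  have hT1ne : T1.Nonempty := by
    obtain ⟨d, hd, hd0⟩ := hM0mem
    exact ⟨d 1, d, hd, hd0, rfl⟩
  have hT1bd : BddAbove T1 := ⟨K, by rintro n ⟨d, hd, _, rfl⟩; exact (hbd d hd).2⟩
  have hM1mem : sSup T1 ∈ T1 := Nat.sSup_mem hT1ne hT1bd
  obtain ⟨A, hA, hA0, hA1⟩ := hM1mem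
  refine ⟨A, hA, ?_⟩
  intro c hc
  rw [lex_le_iff]
  have hc0 : c 0 ≤ M0 := le_csSup hT0bd ⟨c, hc, rfl⟩
  rcases lt_or_eq_of_le hc0 with h | h
  · exact Or.inl (by rw [hA0]; exact h)
  · refine Or.inr ⟨by rw [hA0, h], ?_⟩
    rw [hA1]
    exact le_csSup hT1bd ⟨c, hc, h, rfl⟩

private noncomputable def gkAux (S : Set (Fin 2 → ℕ)) : Fin 2 → ℕ :=
  open Classical in
  if h : ∃ a ∈ S, ∀ c ∈ S, toLex c ≤ toLex a then h.choose else fun _ => 0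

private lemma gkmat_eq_aux (B : Matrix (Fin 2) (Fin 2) ℚ_[2]) :
    GKMat B = gkAux (GKSetMat B) := rfl

private lemma gkmat_spec {B : Matrix (Fin 2) (Fin 2) ℚ_[2]}
    (hex : ∃ a ∈ GKSetMat B, ∀ c ∈ GKSetMat B, toLex c ≤ toLex a) :
    GKMat B ∈ GKSetMat B ∧ ∀ c ∈ GKSetMat B, toLex c ≤ toLex (GKMat B) := by
  rw [gkmat_eq_aux, gkAux, dif_pos hex]
  exact hex.choose_spec

private lemma gkmat_congr {B₁ B₂ : Matrix (Fin 2) (Fin 2) ℚ_[2]}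
    (h : GKSetMat B₁ = GKSetMat B₂) : GKMat B₁ = GKMat B₂ := by
  rw [gkmat_eq_aux, gkmat_eq_aux, h]

private lemma gkset_subset {B U : Matrix (Fin 2) (Fin 2) ℚ_[2]}
    (hU : ∀ i j, ‖U i j‖ ≤ 1) (hUdet : ‖U.det‖ = 1) :
    GKSetMat (Uᵀ * B * U) ⊆ GKSetMat B := by
  rintro d ⟨V, hV, hVdet, hS⟩
  refine ⟨U * V, ?_, ?_, ?_⟩
  · intro i j
    rw [Matrix.mul_apply, Fin.sum_univ_two]
    refine le_trans (Padic.nonarchimedean _ _) (max_le ?_ ?_) <;>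
      rw [norm_mul] <;>
      exact mul_le_one₀ (hU _ _) (norm_nonneg _) (hV _ _)
  · rw [Matrix.det_mul, norm_mul, hUdet, hVdet]; norm_num
  · have he : (U * V)ᵀ * B * (U * V) = Vᵀ * (Uᵀ * B * U) * V := by
      rw [Matrix.transpose_mul]
      simp only [Matrix.mul_assoc]
    rw [he]
    exact hS

end AuxMat


section KeyLemmas

open Matrix

private lemma pow2_congr {m n : ℕ} (h : m = n) : (2:ℝ)^(-(m:ℤ)) = (2:ℝ)^(-(n:ℤ)) := by rw [h]

private lemma le_pow2_of_le {x : ℚ_[2]} {m n : ℕ} (h : n ≤ m)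
    (hx : ‖x‖ ≤ (2:ℝ)^(-(m:ℤ))) : ‖x‖ ≤ (2:ℝ)^(-(n:ℤ)) :=
  le_trans hx (pow2le (by exact_mod_cast h))

private lemma sq_le_pow2_of_le {x : ℚ_[2]} {m n : ℕ} (h : n ≤ m)
    (hx : ‖x‖^2 ≤ (2:ℝ)^(-(m:ℤ))) : ‖x‖^2 ≤ (2:ℝ)^(-(n:ℤ)) :=
  le_trans hx (pow2le (by exact_mod_cast h))

private lemma norm_stepN (x : ℚ_[2]) {n : ℕ} (h : ‖x‖ ≤ (2:ℝ)^(-(n:ℤ)))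
    (hne : ‖x‖ ≠ (2:ℝ)^(-(n:ℤ))) : ‖x‖ ≤ (2:ℝ)^(-((n+1:ℕ):ℤ)) := by
  have h2 := norm_step x h hne
  have e : ((n+1:ℕ):ℤ) = (n:ℤ)+1 := by push_cast; ring
  rw [e]; exact h2

private lemma pow2_addN (m n : ℕ) :
    (2:ℝ)^(-((m+n:ℕ):ℤ)) = (2:ℝ)^(-(m:ℤ)) * (2:ℝ)^(-(n:ℤ)) := by
  have e : ((m+n:ℕ):ℤ) = (m:ℤ)+(n:ℤ) := by push_cast; ring
  rw [e, pow2_add]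

private lemma pow2_succN (n : ℕ) : (2:ℝ)^(-((n+1:ℕ):ℤ)) = (1/2) * (2:ℝ)^(-(n:ℤ)) := by
  have e : ((n+1:ℕ):ℤ) = (n:ℤ)+1 := by push_cast; ring
  rw [e, pow2_succ]

private lemma sq_bound {w : ℚ_[2]} {m : ℕ} (h : ‖w‖ ≤ (2:ℝ)^(-(m:ℤ))) :
    ‖w‖^2 ≤ (2:ℝ)^(-((m+m:ℕ):ℤ)) := by
  rw [pow2_addN]
  calc ‖w‖^2 ≤ ((2:ℝ)^(-(m:ℤ)))^2 := pow_le_pow_left₀ (norm_nonneg _) h 2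
  _ = _ := by ring

private lemma sq_parityN (x : ℚ_[2]) {k : ℕ} (hk : k % 2 = 1)
    (h : ‖x‖^2 ≤ (2:ℝ)^(-(k:ℤ))) : ‖x‖^2 ≤ (2:ℝ)^(-((k+1:ℕ):ℤ)) := by
  have h2 := sq_parity x k hk h
  have e : ((k+1:ℕ):ℤ) = (k:ℤ)+1 := by push_cast; ring
  rw [e]; exact h2

private lemma norm_sqrtN (x : ℚ_[2]) {m k : ℕ} (hm : k + k = m)
    (h : ‖x‖^2 ≤ (2:ℝ)^(-(m:ℤ))) : ‖x‖ ≤ (2:ℝ)^(-(k:ℤ)) := by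
  rw [← norm_sq_le_iff]
  have e : -(2*(k:ℤ)) = -(m:ℤ) := by push_cast; omega
  rw [e]; exact h

private lemma norm_half_of {x : ℚ_[2]} {n : ℕ} (h : ‖2*x‖ ≤ (2:ℝ)^(-((n+1:ℕ):ℤ))) :
    ‖x‖ ≤ (2:ℝ)^(-(n:ℤ)) := by
  rw [half_norm] at h
  rw [pow2_succN] at h
  linarith

private lemma norm4Q : ‖(4:ℚ_[2])‖ = 1/4 := by
  have h : (4:ℚ_[2]) = 2*2 := by norm_num
  rw [h, norm_mul, norm2Q]; norm_num

private lemma norm_two_powQ (t : ℕ) : ‖(2:ℚ_[2])^t‖ = (2:ℝ)^(-(t:ℤ)) := by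
  rw [norm_pow, norm2Q, _root_.zpow_neg, zpow_natCast]
  rw [one_div, inv_pow]

private lemma pow2_3 : (2:ℝ)^(-(3:ℤ)) = 1/8 := by norm_num

private lemma gk_contra {B : Matrix (Fin 2) (Fin 2) ℚ_[2]} {a₁ m : ℕ}
    (hmax : ∀ d ∈ GKSetMat B, toLex d ≤ toLex ![a₁, m]) {d0 d1 : ℕ}
    (hd : ![d0, d1] ∈ GKSetMat B) (h : a₁ < d0 ∨ (a₁ = d0 ∧ m < d1)) : False := by
  have h2 := hmax _ hd
  rw [lex_le_iff] at h2
  simp only [Matrix.cons_val_zero, Matrix.cons_val_one, Matrix.head_cons] at h2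
  omega

private lemma key_even (a b c : ℚ_[2]) (hX : HalfInt !![a, b; b, c])
    (hnd : (!![a, b; b, c]).det ≠ 0) (haniso : AnisoMat !![a, b; b, c])
    (a₁ t : ℕ) (hGK : GKMat !![a, b; b, c] = ![a₁, a₁ + 2 * t])
    (hopt : OptimalMat !![a, b; b, c]) :
    ‖a‖ = (2 : ℝ) ^ (-(a₁ : ℤ)) ∧ ‖2 * b‖ = (2 : ℝ) ^ (-((a₁ + t : ℕ) : ℤ)) ∧
      ‖c‖ = (2 : ℝ) ^ (-((a₁ + 2 * t : ℕ) : ℤ)) := by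
  have hsym : (!![a,b;b,c])ᵀ = !![a,b;b,c] := trans_lit a b b c
  have hmax : ∀ d ∈ GKSetMat !![a,b;b,c], toLex d ≤ toLex ![a₁, a₁+2*t] := by
    have h := (gkmat_spec (gk_max_exists hX hsym hnd)).2
    rwa [hGK] at h
  have hopt' : ![a₁, a₁+2*t] ∈ SMat !![a,b;b,c] := by
    have h : GKMat !![a,b;b,c] ∈ SMat !![a,b;b,c] := hopt
    rwa [hGK] at h
  obtain ⟨-, hdiag, hoff⟩ := hopt'
  have h_a : ‖a‖ ≤ (2:ℝ)^(-((a₁:ℕ):ℤ)) := by simpa using hdiag 0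
  have h_c : ‖c‖ ≤ (2:ℝ)^(-((a₁+2*t:ℕ):ℤ)) := by
    have h := hdiag 1
    simp only [Matrix.cons_val_one, Matrix.head_cons] at h
    exact h
  have h_b2 : ‖2*b‖^2 ≤ (2:ℝ)^(-((a₁+(a₁+2*t):ℕ):ℤ)) := by
    have h := hoff 0 1
    simp only [Matrix.cons_val_zero, Matrix.cons_val_one, Matrix.head_cons] at h
    exact h
  have h_b : ‖2*b‖ ≤ (2:ℝ)^(-((a₁+t:ℕ):ℤ)) :=
    norm_sqrtN _ (by omega) h_b2
  -- Goal 1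
  have ha_eq : ‖a‖ = (2:ℝ)^(-((a₁:ℕ):ℤ)) := by
    by_contra hne
    have ha' : ‖a‖ ≤ (2:ℝ)^(-((a₁+1:ℕ):ℤ)) := norm_stepN a h_a hne
    rcases Nat.eq_zero_or_pos t with ht0 | htpos
    · -- t = 0
      have h_c0 : ‖c‖ ≤ (2:ℝ)^(-((a₁:ℕ):ℤ)) := by
        rw [pow2_congr (show (a₁:ℕ) = a₁+2*t by omega)]; exact h_c
      have h_b0 : ‖2*b‖ ≤ (2:ℝ)^(-((a₁:ℕ):ℤ)) := by
        rw [pow2_congr (show (a₁:ℕ) = a₁+t by omega)]; exact h_b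
      by_cases hbeq : ‖2*b‖ = (2:ℝ)^(-((a₁:ℕ):ℤ))
      · -- disc argument
        have hb2ne : (2*b) ≠ 0 := by
          intro h0
          rw [h0, norm_zero] at hbeq
          exact absurd hbeq.symm (ne_of_gt (pow2pos _))
        obtain ⟨s, hs⟩ := exists_sqrt_disc (2*b) (4*(a*c)) hb2ne (by
          have h4 : ‖4*(a*c)‖ = (1/4) * (‖a‖ * ‖c‖) := by
            rw [norm_mul, norm4Q, norm_mul]
          rw [h4, hbeq, pow2_3]
          have h5 : ‖a‖ ≤ (1/2) * (2:ℝ)^(-((a₁:ℕ):ℤ)) := by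
            rw [← pow2_succN]; exact ha'
          nlinarith [norm_nonneg a, norm_nonneg c, pow2pos ((a₁:ℕ):ℤ), h_c0])
        exact aniso_disc haniso s hs
      · have hb' : ‖2*b‖ ≤ (2:ℝ)^(-((a₁+1:ℕ):ℤ)) := norm_stepN _ h_b0 hbeq
        by_cases hceq : ‖c‖ = (2:ℝ)^(-((a₁:ℕ):ℤ))
        · -- swap
          have hmem : ![a₁, a₁+1] ∈ GKSetMat !![a,b;b,c] := by
            refine mem_gkset swap_unimod.1 swap_unimod.2 ?_
            rw [swap_conj]
            refine mem_SMat (by omega) h_c0 ha' ?_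
            refine sq_le_pow2_of_le (show a₁+(a₁+1) ≤ (a₁+1)+(a₁+1) by omega) ?_
            exact sq_bound hb'
          exact gk_contra hmax hmem (by omega)
        · have hc' : ‖c‖ ≤ (2:ℝ)^(-((a₁+1:ℕ):ℤ)) := norm_stepN _ h_c0 hceq
          have hmem : ![a₁+1, a₁+1] ∈ GKSetMat !![a,b;b,c] := by
            refine mem_gkset_id (mem_SMat le_rfl ha' hc' ?_)
            exact sq_bound hb'
          exact gk_contra hmax hmem (by omega)
    · -- t ≥ 1
      have hmem : ![a₁+1, a₁+2*t-1] ∈ GKSetMat !![a,b;b,c] := by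
        refine mem_gkset_id (mem_SMat (by omega) ha' ?_ ?_)
        · exact le_pow2_of_le (by omega) h_c
        · rw [pow2_congr (show (a₁+1)+(a₁+2*t-1) = a₁+(a₁+2*t) by omega)]
          exact h_b2
      exact gk_contra hmax hmem (by omega)
  have ha0 : a ≠ 0 := by
    intro h0
    rw [h0, norm_zero] at ha_eq
    exact absurd ha_eq.symm (ne_of_gt (pow2pos _))
  -- Goal 2
  have hb_eq : ‖2*b‖ = (2:ℝ)^(-((a₁+t:ℕ):ℤ)) := by
    by_contra hne
    have hb' : ‖2*b‖ ≤ (2:ℝ)^(-((a₁+t+1:ℕ):ℤ)) := norm_stepN _ h_b hne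
    have hb_norm : ‖b‖ ≤ (2:ℝ)^(-((a₁+t:ℕ):ℤ)) := norm_half_of hb'
    set lam : ℚ_[2] := -b/a with hlamdef
    have hblam : a*lam + b = 0 := by
      rw [hlamdef]; field_simp; ring
    have hlam1 : ‖lam‖ ≤ 1 := by
      rw [hlamdef, norm_div, norm_neg]
      rw [div_le_one (by rw [ha_eq]; exact pow2pos _)]
      rw [ha_eq]
      exact le_pow2_of_le (by omega) hb_norm
    set c' : ℚ_[2] := a*lam^2 + 2*b*lam + c with hc'def
    have hdet_eq : (!![a,b;b,c]).det = a*c - b*b := by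
      rw [Matrix.det_fin_two_of]
    have hac' : a * c' = a*c - b*b := by
      rw [hc'def, hlamdef]; field_simp; ring
    have hc'0 : c' ≠ 0 := by
      intro h0
      apply hnd
      rw [hdet_eq, ← hac', h0, mul_zero]
    have hc'le : ‖c'‖ ≤ (2:ℝ)^(-((a₁+2*t:ℕ):ℤ)) := by
      have h1 : ‖a*c - b*b‖ ≤ (2:ℝ)^(-((a₁+(a₁+2*t):ℕ):ℤ)) := by
        refine le_trans (norm_sub_ultra _ _) (max_le ?_ ?_)
        · rw [norm_mul, pow2_addN]
          exact mul_le_mul h_a h_c (norm_nonneg _) (le_of_lt (pow2pos _))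
        · have h2 : ‖b*b‖ = ‖b‖^2 := by rw [norm_mul]; ring
          rw [h2]
          refine sq_le_pow2_of_le (show a₁+(a₁+2*t) ≤ (a₁+t)+(a₁+t) by omega) ?_
          exact sq_bound hb_norm
      have h2 : ‖a‖ * ‖c'‖ ≤ (2:ℝ)^(-((a₁+(a₁+2*t):ℕ):ℤ)) := by
        rw [← norm_mul, hac']; exact h1
      rw [ha_eq, pow2_addN] at h2
      exact le_of_mul_le_mul_left h2 (pow2pos _)
    by_cases hc'eq : ‖c'‖ = (2:ℝ)^(-((a₁+2*t:ℕ):ℤ))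
    · -- μ = lam + 2^t
      set mu : ℚ_[2] := lam + (2:ℚ_[2])^t with hmudef
      have hmu1 : ‖mu‖ ≤ 1 := by
        rw [hmudef]
        refine le_trans (Padic.nonarchimedean _ _) (max_le hlam1 ?_)
        rw [norm_two_powQ]
        calc (2:ℝ)^(-(t:ℤ)) ≤ (2:ℝ)^(-(0:ℤ)) := pow2le (by omega)
        _ = 1 := by norm_num
      have hoffd : a*mu + b = a*(2:ℚ_[2])^t := by
        rw [hmudef]; linear_combination hblam
      have hcorner : a*mu^2 + 2*b*mu + c = c' + a*((2:ℚ_[2])^t)^2 := by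
        rw [hmudef, hc'def]
        linear_combination (2*(2:ℚ_[2])^t) * hblam
      have hnorm_at : ‖a*((2:ℚ_[2])^t)^2‖ = (2:ℝ)^(-((a₁+2*t:ℕ):ℤ)) := by
        rw [norm_mul, ha_eq, ← pow_mul, norm_two_powQ, pow2_addN]
        congr 1
        rw [pow2_congr (show (t*2 : ℕ) = 2*t by ring)]
      have hat0 : a*((2:ℚ_[2])^t)^2 ≠ 0 := by
        refine mul_ne_zero ha0 (pow_ne_zero _ (pow_ne_zero _ ?_))
        norm_num
      have hsumnorm : ‖c' + a*((2:ℚ_[2])^t)^2‖ ≤ (2:ℝ)^(-((a₁+2*t+1:ℕ):ℤ)) := by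
        have h1 := norm_add_le_half c' (a*((2:ℚ_[2])^t)^2) hc'0
          (by rw [hc'eq, hnorm_at])
        rw [hc'eq] at h1
        rw [pow2_succN]
        exact h1
      have hb2at : ‖2*(a*(2:ℚ_[2])^t)‖ = (2:ℝ)^(-((a₁+t+1:ℕ):ℤ)) := by
        rw [half_norm, norm_mul, ha_eq, norm_two_powQ, pow2_succN, pow2_addN]
      have hmem : ![a₁, a₁+2*t+1] ∈ GKSetMat !![a,b;b,c] := by
        refine mem_gkset (shear_unimod mu hmu1).1 (shear_unimod mu hmu1).2 ?_
        rw [shear_conj, hoffd, hcorner]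
        refine mem_SMat (by omega) ha_eq.le hsumnorm ?_
        refine sq_le_pow2_of_le (show a₁+(a₁+2*t+1) ≤ (a₁+t+1)+(a₁+t+1) by omega) ?_
        exact sq_bound hb2at.le
      exact gk_contra hmax hmem (by omega)
    · have hc'' : ‖c'‖ ≤ (2:ℝ)^(-((a₁+2*t+1:ℕ):ℤ)) := norm_stepN _ hc'le hc'eq
      have hmem : ![a₁, a₁+2*t+1] ∈ GKSetMat !![a,b;b,c] := by
        refine mem_gkset (shear_unimod lam hlam1).1 (shear_unimod lam hlam1).2 ?_
        rw [shear_conj, hblam, ← hc'def]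
        refine mem_SMat (by omega) ha_eq.le hc'' ?_
        have hz : ‖(2:ℚ_[2])*0‖^2 = 0 := by norm_num
        rw [hz]
        exact le_of_lt (pow2pos _)
      exact gk_contra hmax hmem (by omega)
  -- Goal 3
  have hc_eq : ‖c‖ = (2:ℝ)^(-((a₁+2*t:ℕ):ℤ)) := by
    by_contra hne
    have hc' : ‖c‖ ≤ (2:ℝ)^(-((a₁+2*t+1:ℕ):ℤ)) := norm_stepN _ h_c hne
    have hb2ne : (2*b) ≠ 0 := by
      intro h0
      rw [h0, norm_zero] at hb_eq
      exact absurd hb_eq.symm (ne_of_gt (pow2pos _))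
    obtain ⟨s, hs⟩ := exists_sqrt_disc (2*b) (4*(a*c)) hb2ne (by
      have h4 : ‖4*(a*c)‖ = (1/4) * (‖a‖ * ‖c‖) := by
        rw [norm_mul, norm4Q, norm_mul]
      have h5 : ‖2*b‖^2 = (2:ℝ)^(-((a₁:ℕ):ℤ)) * (2:ℝ)^(-((a₁+2*t:ℕ):ℤ)) := by
        rw [hb_eq, pow_two, ← pow2_addN, ← pow2_addN]
        exact pow2_congr (by omega)
      rw [h4, h5, pow2_3, ha_eq]
      have h6 : ‖c‖ ≤ (1/2) * (2:ℝ)^(-((a₁+2*t:ℕ):ℤ)) := by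
        rw [← pow2_succN]; exact hc'
      nlinarith [norm_nonneg a, norm_nonneg c, pow2pos ((a₁:ℕ):ℤ),
        pow2pos ((a₁+2*t:ℕ):ℤ), ha_eq.le])
    exact aniso_disc haniso s hs
  exact ⟨ha_eq, hb_eq, hc_eq⟩

private lemma key_odd (a b c : ℚ_[2]) (hX : HalfInt !![a, b; b, c])
    (hnd : (!![a, b; b, c]).det ≠ 0)
    (α₁ α₂ : ℕ) (hlt : α₁ < α₂) (hpar : (α₁ + α₂) % 2 = 1)
    (hGK : GKMat !![a, b; b, c] = ![α₁, α₂])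
    (hopt : OptimalMat !![a, b; b, c]) :
    ‖a‖ = (2 : ℝ) ^ (-(α₁ : ℤ)) ∧ ‖c‖ = (2 : ℝ) ^ (-(α₂ : ℤ)) ∧
      ‖2 * b‖^2 ≤ (2 : ℝ) ^ (-((α₁ + α₂ + 1 : ℕ) : ℤ)) := by
  have hsym : (!![a,b;b,c])ᵀ = !![a,b;b,c] := trans_lit a b b c
  have hmax : ∀ d ∈ GKSetMat !![a,b;b,c], toLex d ≤ toLex ![α₁, α₂] := by
    have h := (gkmat_spec (gk_max_exists hX hsym hnd)).2
    rwa [hGK] at h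
  have hopt' : ![α₁, α₂] ∈ SMat !![a,b;b,c] := by
    have h : GKMat !![a,b;b,c] ∈ SMat !![a,b;b,c] := hopt
    rwa [hGK] at h
  obtain ⟨-, hdiag, hoff⟩ := hopt'
  have h_a : ‖a‖ ≤ (2:ℝ)^(-((α₁:ℕ):ℤ)) := by simpa using hdiag 0
  have h_c : ‖c‖ ≤ (2:ℝ)^(-((α₂:ℕ):ℤ)) := by simpa using hdiag 1
  have h_b2 : ‖2*b‖^2 ≤ (2:ℝ)^(-((α₁+α₂:ℕ):ℤ)) := by simpa using hoff 0 1
  have h_b2' : ‖2*b‖^2 ≤ (2:ℝ)^(-((α₁+α₂+1:ℕ):ℤ)) := sq_parityN _ hpar h_b2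
  have ha_eq : ‖a‖ = (2:ℝ)^(-((α₁:ℕ):ℤ)) := by
    by_contra hne
    have ha' : ‖a‖ ≤ (2:ℝ)^(-((α₁+1:ℕ):ℤ)) := norm_stepN a h_a hne
    rcases Nat.lt_or_ge (α₁+1) α₂ with hgt | hle
    · have hmem : ![α₁+1, α₂-1] ∈ GKSetMat !![a,b;b,c] := by
        refine mem_gkset_id (mem_SMat (by omega) ha' ?_ ?_)
        · exact le_pow2_of_le (by omega) h_c
        · rw [pow2_congr (show (α₁+1)+(α₂-1) = α₁+α₂ by omega)]
          exact h_b2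
      exact gk_contra hmax hmem (by omega)
    · have hα2 : α₂ = α₁+1 := by omega
      have hmem : ![α₁+1, α₁+1] ∈ GKSetMat !![a,b;b,c] := by
        refine mem_gkset_id (mem_SMat le_rfl ha' ?_ ?_)
        · rw [pow2_congr (show (α₁+1 : ℕ) = α₂ by omega)]
          exact h_c
        · rw [pow2_congr (show (α₁+1)+(α₁+1) = α₁+α₂+1 by omega)]
          exact h_b2'
      exact gk_contra hmax hmem (by omega)
  have hc_eq : ‖c‖ = (2:ℝ)^(-((α₂:ℕ):ℤ)) := by
    by_contra hne
    have hc' : ‖c‖ ≤ (2:ℝ)^(-((α₂+1:ℕ):ℤ)) := norm_stepN _ h_c hne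
    have hmem : ![α₁, α₂+1] ∈ GKSetMat !![a,b;b,c] := by
      refine mem_gkset_id (mem_SMat (by omega) h_a hc' ?_)
      rw [pow2_congr (show α₁+(α₂+1) = α₁+α₂+1 by omega)]
      exact h_b2'
    exact gk_contra hmax hmem (by omega)
  exact ⟨ha_eq, hc_eq, h_b2'⟩

end KeyLemmas


section Assembly

open Matrix

private lemma pow2ltN (n : ℕ) : (2:ℝ)^(-((n+1:ℕ):ℤ)) < (2:ℝ)^(-(n:ℤ)) := by
  apply zpow_lt_zpow_right₀ (by norm_num : (1:ℝ) < 2)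
  push_cast; omega

private lemma sSup_eq_of {S : Set ℕ} {v : ℕ} (hmem : v ∈ S) (hub : ∀ m ∈ S, m ≤ v) :
    v = sSup S :=
  Eq.symm (le_antisymm (csSup_le ⟨v, hmem⟩ hub) (le_csSup ⟨v, fun m hm => hub m hm⟩ hmem))

private lemma sInf_eq_of {S : Set ℕ} {v : ℕ} (hmem : v ∈ S) (hlb : ∀ m ∈ S, v ≤ m) :
    v = sInf S :=
  Eq.symm (le_antisymm (Nat.sInf_le hmem) (le_csInf ⟨v, hmem⟩ hlb))

private lemma admissible_swap (α₁ α₂ : ℕ) (hle : α₁ ≤ α₂) (hpar : (α₁ + α₂) % 2 = 0) :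
    Admissible ![α₁, α₂] (Equiv.swap 0 1) := by
  refine ⟨Equiv.swap_mul_self 0 1, ?_, ?_, ?_, ?_, ?_⟩
  · exact le_trans (Finset.card_filter_le _ _) (by simp)
  · intro i hi
    exfalso
    simp only [Finset.mem_filter, Finset.mem_univ, true_and] at hi
    fin_cases i <;> simp at hi
  · intro i₀
    constructor
    · rw [Finset.card_le_one]
      intro x hx y hy
      simp only [Finset.mem_filter, Finset.mem_univ, true_and] at hx hy
      fin_cases x <;> fin_cases y <;> simp at hx hy ⊢ <;> omega
    · rw [Finset.card_le_one]
      intro x hx y hy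
      simp only [Finset.mem_filter, Finset.mem_univ, true_and] at hx hy
      fin_cases x <;> fin_cases y <;> simp at hx hy ⊢ <;> omega
  · intro i hi
    fin_cases i <;> simp at hi ⊢
    · refine sInf_eq_of ⟨hi, ?_⟩ ?_
      · exact ⟨by omega, rfl⟩
      · rintro m ⟨-, -, rfl⟩
        exact le_rfl
    · exact absurd hi (by omega)
  · intro i hi
    fin_cases i <;> simp at hi ⊢
    · exact absurd hi (by omega)
    · refine sSup_eq_of ⟨hi, ?_⟩ ?_
      · exact ⟨by omega, rfl⟩
      · rintro m ⟨-, -, rfl⟩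
        exact le_rfl

private lemma admissible_one (α₁ α₂ : ℕ) (hlt : α₁ < α₂) (hpar : (α₁ + α₂) % 2 = 1) :
    Admissible ![α₁, α₂] 1 := by
  refine ⟨one_mul 1, ?_, ?_, ?_, ?_, ?_⟩
  · exact le_trans (Finset.card_filter_le _ _) (by simp)
  · intro i hi j hj hij
    have hparne : ![α₁, α₂] i % 2 ≠ ![α₁, α₂] j % 2 := by
      fin_cases i <;> fin_cases j <;> simp_all <;> omega
    refine ⟨hparne, ?_⟩
    have hset : {m | ∃ l, ((1 : Equiv.Perm (Fin 2)) l = l ∨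
        (![α₁,α₂] : Fin 2 → ℕ) ((1 : Equiv.Perm (Fin 2)) l) < ![α₁,α₂] l) ∧
        ![α₁,α₂] l % 2 = ![α₁,α₂] i % 2 ∧ ![α₁,α₂] l = m}
        = {(![α₁,α₂] : Fin 2 → ℕ) i} := by
      ext m
      simp only [Set.mem_setOf_eq, Set.mem_singleton_iff]
      constructor
      · rintro ⟨l, -, h2, rfl⟩
        fin_cases l <;> fin_cases i <;> simp_all <;> omega
      · rintro rfl
        exact ⟨i, Or.inl (Equiv.Perm.one_apply i), rfl, rfl⟩
    rw [hset, csSup_singleton]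
  · intro i₀
    constructor
    · rw [Finset.card_le_one]
      intro x hx y hy
      simp only [Finset.mem_filter, Finset.mem_univ, true_and,
        Equiv.Perm.one_apply] at hx hy
      simp at hx
    · rw [Finset.card_le_one]
      intro x hx y hy
      simp only [Finset.mem_filter, Finset.mem_univ, true_and,
        Equiv.Perm.one_apply] at hx hy
      fin_cases x <;> fin_cases y <;> simp at hx hy ⊢ <;> omega
  · intro i h
    simp only [Equiv.Perm.one_apply] at h
    exact absurd h (lt_irrefl _)
  · intro i h
    simp only [Equiv.Perm.one_apply] at h
    exact absurd h (lt_irrefl _)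

private lemma sub_id (B : Matrix (Fin 2) (Fin 2) ℚ_[2]) :
    B.submatrix ![0,1] ![0,1] = B := by
  ext i j
  fin_cases i <;> fin_cases j <;> rfl

private lemma sub_swap (x y z : ℚ_[2]) :
    (!![x,y;y,z]).submatrix ![1,0] ![1,0] = !![z,y;y,x] := by
  ext i j
  fin_cases i <;> fin_cases j <;> rfl

private lemma gkmat_swap (x y z : ℚ_[2]) : GKMat !![z,y;y,x] = GKMat !![x,y;y,z] := by
  apply gkmat_congr
  have h1 := gkset_subset (B := !![x,y;y,z]) swap_unimod.1 swap_unimod.2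
  rw [swap_conj] at h1
  have h2 := gkset_subset (B := !![z,y;y,x]) swap_unimod.1 swap_unimod.2
  rw [swap_conj] at h2
  exact Set.Subset.antisymm h1 h2

private lemma reduced_abc (a b c : ℚ_[2]) (hhi : HalfInt !![a,b;b,c])
    (hdet : (!![a,b;b,c]).det ≠ 0) (han : AnisoMat !![a,b;b,c])
    (hopt : OptimalMat !![a,b;b,c]) : IsReducedMat !![a,b;b,c] := by
  have hsymB := trans_lit a b b c
  have hmemS : GKMat !![a,b;b,c] ∈ SMat !![a,b;b,c] := hopt
  obtain ⟨hmono, hdiag, hoff⟩ := hmemS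
  set α₁ := GKMat !![a,b;b,c] 0 with hα₁
  set α₂ := GKMat !![a,b;b,c] 1 with hα₂
  have hle : α₁ ≤ α₂ := hmono (by decide : (0:Fin 2) ≤ 1)
  have hgfun : GKMat !![a,b;b,c] = ![α₁, α₂] := by
    funext i
    fin_cases i
    · simp [hα₁]
    · simp [hα₂]
  by_cases hpar : (α₁ + α₂) % 2 = 0
  · -- even case, σ = swap
    unfold IsReducedMat ReducedMat
    rw [hgfun]
    refine ⟨Equiv.swap 0 1, admissible_swap α₁ α₂ hle hpar,
      (by rw [← hgfun]; exact hopt), ?_, ?_, ?_⟩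
    · intro i hne hlei
      fin_cases i
      · simp only [Fin.zero_eta, Fin.mk_one, Fin.isValue, Equiv.swap_apply_left,
          Matrix.cons_val_zero, Matrix.cons_val_one, Matrix.head_cons]
        rw [sub_id]
        exact hgfun
      · simp only [Fin.zero_eta, Fin.mk_one, Fin.isValue, Equiv.swap_apply_right,
          Matrix.cons_val_zero, Matrix.cons_val_one, Matrix.head_cons] at hlei ⊢
        have heq : α₁ = α₂ := le_antisymm hle hlei
        rw [sub_swap, gkmat_swap, hgfun, heq]
    · intro i hfix
      exfalso
      fin_cases i <;> simp at hfix
    · intro i j hji hjσ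
      exfalso
      fin_cases i <;> fin_cases j <;> simp at hji hjσ
  · -- odd case, σ = 1
    have hlt : α₁ < α₂ := by
      rcases eq_or_lt_of_le hle with h | h
      · exfalso; omega
      · exact h
    have hparity : (α₁ + α₂) % 2 = 1 := by omega
    have hko := key_odd a b c hhi hdet α₁ α₂ hlt hparity hgfun hopt
    unfold IsReducedMat ReducedMat
    rw [hgfun]
    refine ⟨1, admissible_one α₁ α₂ hlt hparity,
      (by rw [← hgfun]; exact hopt), ?_, ?_, ?_⟩
    · intro i hne
      exact absurd (Equiv.Perm.one_apply i) hne
    · intro i _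
      fin_cases i
      · show ‖a‖ = (2:ℝ)^(-((α₁:ℕ):ℤ))
        exact hko.1
      · show ‖c‖ = (2:ℝ)^(-((α₂:ℕ):ℤ))
        exact hko.2.1
    · intro i j hji hjσ
      simp only [Equiv.Perm.one_apply] at hjσ
      fin_cases i <;> fin_cases j
      · exact absurd rfl hji
      · show ‖2*b‖^2 < (2:ℝ)^(-((α₁+α₂:ℕ):ℤ))
        exact lt_of_le_of_lt hko.2.2 (pow2ltN (α₁+α₂))
      · show ‖2*b‖^2 < (2:ℝ)^(-((α₂+α₁:ℕ):ℤ))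
        rw [pow2_congr (show α₂+α₁ = α₁+α₂ by omega)]
        exact lt_of_le_of_lt hko.2.2 (pow2ltN (α₁+α₂))
      · exact absurd rfl hji

end Assembly

theorem statement_12 (a b c : ℚ_[2])
    (hX : HalfInt !![a, b; b, c]) (hnd : (!![a, b; b, c]).det ≠ 0)
    (haniso : AnisoMat !![a, b; b, c])
    (a₁ t : ℕ) (hGK : GKMat !![a, b; b, c] = ![a₁, a₁ + 2 * t])
    (hopt : OptimalMat !![a, b; b, c]) :
    (‖a‖ = (2 : ℝ) ^ (-(a₁ : ℤ)) ∧ ‖2 * b‖ = (2 : ℝ) ^ (-((a₁ + t : ℕ) : ℤ)) ∧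
      ‖c‖ = (2 : ℝ) ^ (-((a₁ + 2 * t : ℕ) : ℤ))) ∧
    ∀ Y : Matrix (Fin 2) (Fin 2) ℚ_[2], Yᵀ = Y → HalfInt Y → Y.det ≠ 0 →
      AnisoMat Y → OptimalMat Y → IsReducedMat Y := by
  constructor
  · exact key_even a b c hX hnd haniso a₁ t hGK hopt
  · intro Y hYsym hYhi hYdet hYan hYopt
    have hY : Y = !![Y 0 0, Y 0 1; Y 0 1, Y 1 1] := by
      ext i j
      fin_cases i <;> fin_cases j
      · rfl
      · rfl
      · show Y 1 0 = !![Y 0 0, Y 0 1; Y 0 1, Y 1 1] 1 0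
        have h10 : Y 1 0 = Y 0 1 := by
          have h := congrFun (congrFun hYsym 0) 1
          simpa [Matrix.transpose_apply] using h
        rw [h10]
        rfl
      · rfl
    rw [hY] at hYhi hYdet hYan hYopt ⊢
    exact reduced_abc _ _ _ hYhi hYdet hYan hYopt

end Mat2
end GKPaper
end
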